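/- Closing property of conjugate points, secant case: Let W ⊆ ℝ³ be a 2-dimensional subspace containing two linearly independent vectors R, S with ⟨R,R⟩ = 0 and ⟨S,S⟩ = 0 (the line ℓ meets the conic C in two points). Let P₁,…,P_{2n} ∈ W with ⟨Pᵢ,Pᵢ⟩ ≠ 0 have the closing property with respect to C, and let Q₁,…,Q_{2n} ∈ W be nonzero vectors with ⟨Pᵢ,Qᵢ⟩ = 0 and ⟨Qᵢ,Qᵢ⟩ ≠ 0 for each i (Qᵢ is the conjugate point of Pᵢ on ℓ with respect to C). Then Q₁,…,Q_{2n} also have the closing property with respect to C. -/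
import Mathlib



/-- Minkowski product on ℝ³. -/
def mink (X Y : Fin 3 → ℝ) : ℝ := X 0 * Y 0 + X 1 * Y 1 - X 2 * Y 2

/-- The reversion map in the point `P` (with `⟨P,P⟩ ≠ 0`), as a linear map on
representing vectors: `M_P X = ⟨P,P⟩X − 2⟨X,P⟩P`. -/
def rev (P X : Fin 3 → ℝ) : Fin 3 → ℝ := mink P P • X - (2 * mink X P) • P

/-- `chain n P X = (M_{P n} ∘ ⋯ ∘ M_{P 1}) X`, the composition of the reversions in
`P 0, …, P (n-1)`, applied in this order. -/
def chain : (n : ℕ) → (Fin n → (Fin 3 → ℝ)) → (Fin 3 → ℝ) → (Fin 3 → ℝ)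
  | 0, _, X => X
  | n + 1, P, X => rev (P (Fin.last n)) (chain n (fun i => P i.castSucc) X)

/-- The points `P 0, …, P (n-1)` have the closing property with respect to the conic
`C` iff `M_{P n} ∘ ⋯ ∘ M_{P 1}` is a nonzero scalar multiple of the identity. -/
def closes (n : ℕ) (P : Fin n → (Fin 3 → ℝ)) : Prop :=
  ∃ c : ℝ, c ≠ 0 ∧ ∀ X, chain n P X = c • X

def nvec (R S : Fin 3 → ℝ) : Fin 3 → ℝ :=
  ![R 1 * S 2 - R 2 * S 1, R 2 * S 0 - R 0 * S 2, R 1 * S 0 - R 0 * S 1]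

lemma rev_smul (P : Fin 3 → ℝ) (s : ℝ) (X : Fin 3 → ℝ) : rev P (s • X) = s • rev P X := by
  funext i
  simp only [rev, mink, Pi.sub_apply, Pi.smul_apply, smul_eq_mul]
  ring

lemma rev_rev_self (P X : Fin 3 → ℝ) : rev P (rev P X) = (mink P P)^2 • X := by
  funext i
  simp only [rev, mink, Pi.sub_apply, Pi.smul_apply, smul_eq_mul]
  ring

lemma rev_comm (P N : Fin 3 → ℝ) (h : mink P N = 0) (X : Fin 3 → ℝ) :
    rev N (rev P X) = rev P (rev N X) := by
  have h' : P 0 * N 0 + P 1 * N 1 - P 2 * N 2 = 0 := h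
  funext i
  simp only [rev, mink, Pi.sub_apply, Pi.smul_apply, smul_eq_mul]
  linear_combination (4 * (X 0 * P 0 + X 1 * P 1 - X 2 * P 2) * N i
    - 4 * (X 0 * N 0 + X 1 * N 1 - X 2 * N 2) * P i) * h'

lemma mink_comb (R S : Fin 3 → ℝ) (a b c d : ℝ) :
    mink (a • R + b • S) (c • R + d • S)
      = a * c * mink R R + (a * d + b * c) * mink R S + b * d * mink S S := by
  simp only [mink, Pi.add_apply, Pi.smul_apply, smul_eq_mul]
  ring

lemma mink_nvec (R S : Fin 3 → ℝ) (a b : ℝ) :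
    mink (a • R + b • S) (nvec R S) = 0 := by
  simp only [mink, nvec, Pi.add_apply, Pi.smul_apply, smul_eq_mul,
    Matrix.cons_val_zero, Matrix.cons_val_one, Matrix.head_cons, Matrix.cons_val_two,
    Matrix.tail_cons]
  ring

lemma mink_nvec_self (R S : Fin 3 → ℝ) :
    mink (nvec R S) (nvec R S) = (mink R S)^2 - mink R R * mink S S := by
  simp only [mink, nvec, Matrix.cons_val_zero, Matrix.cons_val_one, Matrix.head_cons,
    Matrix.cons_val_two, Matrix.tail_cons]
  ring


set_option maxRecDepth 10000 in
set_option maxHeartbeats 4000000 in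
lemma key0 (r0 r1 r2 s0 s1 s2 x0 x1 x2 a b c d : ℝ)
    (hR : r0 * r0 + r1 * r1 - r2 * r2 = 0) (hS : s0 * s0 + s1 * s1 - s2 * s2 = 0)
    (h : a * d + b * c = 0) :
    (-r2 * r2 * s1 * s1 * s2 * s2 * x0 * b * b * c * c - r2 * r2 * s1 * s1 * s2 * s2 * x0 * a * a * d * d + r2 * r2 * s1 * s1 * s1 * s1 * x0 * b * b * c * c + r2 * r2 * s1 * s1 * s1 * s1 * x0 * a * a * d * d + 2 * r2 * r2 * s0 * s1 * s2 * s2 * x1 * b * b * c * c - 2 * r2 * r2 * s0 * s1 * s1 * s2 * x2 * b * b * c * c + 2 * r2 * r2 * s0 * s1 * s1 * s2 * x2 * a * a * d * d - 2 * r2 * r2 * s0 * s1 * s1 * s1 * x1 * a * a * d * d + r2 * r2 * s0 * s0 * s2 * s2 * x0 * b * b * c * c - r2 * r2 * s0 * s0 * s2 * s2 * x0 * a * a * d * d + 2 * r2 * r2 * s0 * s0 * s1 * s1 * x0 * b * b * c * c - 2 * r2 * r2 * s0 * s0 * s0 * s2 * x2 * b * b * c * c + 2 * r2 * r2 * s0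 * s0 * s0 * s2 * x2 * a * a * d * d - 2 * r2 * r2 * s0 * s0 * s0 * s1 * x1 * a * a * d * d + r2 * r2 * s0 * s0 * s0 * s0 * x0 * b * b * c * c - r2 * r2 * s0 * s0 * s0 * s0 * x0 * a * a * d * d - 2 * r2 * r2 * r2 * s1 * s1 * s2 * x0 * a * b * c * c - 2 * r2 * r2 * r2 * s1 * s1 * s2 * x0 * a * a * c * d + 4 * r2 * r2 * r2 * s0 * s1 * s2 * x1 * a * b * c * c - 2 * r2 * r2 * r2 * s0 * s1 * s1 * x2 * a * b * c * c + 2 * r2 * r2 * r2 * s0 * s1 * s1 * x2 * a * a * c * d + 2 * r2 * r2 * r2 * s0 * s0 * s2 * x0 * a * b * c * c - 2 * r2 * r2 * r2 * s0 * s0 * s2 * x0 * a * a * c * d - 2 * r2 * r2 * r2 * s0 * s0 * s0 * x2 * a * b * c * c + 2 * r2 * r2 * r2 * s0 * s0 * s0 * x2 * a * a * c * d - 2 * r2 * r2 * r2 * r2 * s1 * s1 * x0 * a * a * c * c + 2 * r2 * r2 * r2 * r2 * s0 * s1 * x1 * a * a * c * c + 2 * r1 * r2 * s1 * s2 * s2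 * s2 * x0 * b * b * c * c + 2 * r1 * r2 * s1 * s2 * s2 * s2 * x0 * a * a * d * d - 2 * r1 * r2 * s1 * s1 * s1 * s2 * x0 * b * b * c * c - 2 * r1 * r2 * s1 * s1 * s1 * s2 * x0 * a * a * d * d - 2 * r1 * r2 * s0 * s2 * s2 * s2 * x1 * b * b * c * c + 2 * r1 * r2 * s0 * s1 * s2 * s2 * x2 * b * b * c * c - 4 * r1 * r2 * s0 * s1 * s2 * s2 * x2 * a * a * d * d - 2 * r1 * r2 * s0 * s1 * s1 * s2 * x1 * b * b * c * c + 4 * r1 * r2 * s0 * s1 * s1 * s2 * x1 * a * a * d * d + 2 * r1 * r2 * s0 * s1 * s1 * s1 * x2 * b * b * c * c - 6 * r1 * r2 * s0 * s0 * s1 * s2 * x0 * b * b * c * c + 2 * r1 * r2 * s0 * s0 * s1 * s2 * x0 * a * a * d * d + 2 * r1 * r2 * s0 * s0 * s0 * s2 * x1 * b * b * c * c + 2 * r1 * r2 * s0 * s0 * s0 * s1 * x2 * b * b * c * c + 4 * r1 * r2 * r2 * s1 * s2 * s2 * x0 * a * b * c * c + 4 * r1 * r2 * r2 * s1 * s2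 * s2 * x0 * a * a * c * d + 2 * r1 * r2 * r2 * s1 * s1 * s1 * x0 * a * b * c * c + 2 * r1 * r2 * r2 * s1 * s1 * s1 * x0 * a * a * c * d - 4 * r1 * r2 * r2 * s0 * s2 * s2 * x1 * a * b * c * c - 4 * r1 * r2 * r2 * s0 * s1 * s2 * x2 * a * a * c * d - 2 * r1 * r2 * r2 * s0 * s1 * s1 * x1 * a * b * c * c - 2 * r1 * r2 * r2 * s0 * s1 * s1 * x1 * a * a * c * d - 2 * r1 * r2 * r2 * s0 * s0 * s1 * x0 * a * b * c * c + 2 * r1 * r2 * r2 * s0 * s0 * s1 * x0 * a * a * c * d + 2 * r1 * r2 * r2 * s0 * s0 * s0 * x1 * a * b * c * c - 2 * r1 * r2 * r2 * s0 * s0 * s0 * x1 * a * a * c * d + 4 * r1 * r2 * r2 * r2 * s1 * s2 * x0 * a * a * c * c - 2 * r1 * r2 * r2 * r2 * s0 * s2 * x1 * a * a * c * c - 2 * r1 * r2 * r2 * r2 * s0 * s1 * x2 * a * a * c * c - r1 * r1 * s2 * s2 * s2 * s2 * x0 * b * b * c * c - r1 * r1 * s2 * s2 * s2 * s2 * x0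 * a * a * d * d + r1 * r1 * s1 * s1 * s2 * s2 * x0 * b * b * c * c + r1 * r1 * s1 * s1 * s2 * s2 * x0 * a * a * d * d + 2 * r1 * r1 * s0 * s2 * s2 * s2 * x2 * a * a * d * d + 2 * r1 * r1 * s0 * s1 * s2 * s2 * x1 * b * b * c * c - 2 * r1 * r1 * s0 * s1 * s2 * s2 * x1 * a * a * d * d - 2 * r1 * r1 * s0 * s1 * s1 * s2 * x2 * b * b * c * c + 2 * r1 * r1 * s0 * s0 * s2 * s2 * x0 * b * b * c * c + r1 * r1 * s0 * s0 * s1 * s1 * x0 * b * b * c * c - r1 * r1 * s0 * s0 * s1 * s1 * x0 * a * a * d * d - 2 * r1 * r1 * s0 * s0 * s0 * s2 * x2 * a * a * d * d - 2 * r1 * r1 * s0 * s0 * s0 * s1 * x1 * b * b * c * c + 2 * r1 * r1 * s0 * s0 * s0 * s1 * x1 * a * a * d * d - r1 * r1 * s0 * s0 * s0 * s0 * x0 * b * b * c * c + r1 * r1 * s0 * s0 * s0 * s0 * x0 * a * a * d * d - 2 * r1 * r1 * r2 * s2 * s2 * s2 * x0 * a * b * c * c - 2 * r1 * r1 * r2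 * s2 * s2 * s2 * x0 * a * a * c * d - 4 * r1 * r1 * r2 * s1 * s1 * s2 * x0 * a * b * c * c - 4 * r1 * r1 * r2 * s1 * s1 * s2 * x0 * a * a * c * d + 2 * r1 * r1 * r2 * s0 * s2 * s2 * x2 * a * b * c * c + 2 * r1 * r1 * r2 * s0 * s2 * s2 * x2 * a * a * c * d + 4 * r1 * r1 * r2 * s0 * s1 * s2 * x1 * a * a * c * d + 4 * r1 * r1 * r2 * s0 * s1 * s1 * x2 * a * b * c * c - 2 * r1 * r1 * r2 * s0 * s0 * s2 * x0 * a * b * c * c + 2 * r1 * r1 * r2 * s0 * s0 * s2 * x0 * a * a * c * d + 2 * r1 * r1 * r2 * s0 * s0 * s0 * x2 * a * b * c * c - 2 * r1 * r1 * r2 * s0 * s0 * s0 * x2 * a * a * c * d - 2 * r1 * r1 * r2 * r2 * s2 * s2 * x0 * a * a * c * c + 2 * r1 * r1 * r2 * r2 * s1 * s1 * x0 * a * a * c * c + 2 * r1 * r1 * r2 * r2 * s0 * s2 * x2 * a * a * c * c - 2 * r1 * r1 * r2 * r2 * s0 * s1 * x1 * a * a * c * c + 2 * r1 * r1 * r1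 * s1 * s2 * s2 * x0 * a * b * c * c + 2 * r1 * r1 * r1 * s1 * s2 * s2 * x0 * a * a * c * d + 2 * r1 * r1 * r1 * s0 * s2 * s2 * x1 * a * b * c * c - 2 * r1 * r1 * r1 * s0 * s2 * s2 * x1 * a * a * c * d - 4 * r1 * r1 * r1 * s0 * s1 * s2 * x2 * a * b * c * c + 2 * r1 * r1 * r1 * s0 * s0 * s1 * x0 * a * b * c * c - 2 * r1 * r1 * r1 * s0 * s0 * s1 * x0 * a * a * c * d - 2 * r1 * r1 * r1 * s0 * s0 * s0 * x1 * a * b * c * c + 2 * r1 * r1 * r1 * s0 * s0 * s0 * x1 * a * a * c * d - 4 * r1 * r1 * r1 * r2 * s1 * s2 * x0 * a * a * c * c + 2 * r1 * r1 * r1 * r2 * s0 * s2 * x1 * a * a * c * c + 2 * r1 * r1 * r1 * r2 * s0 * s1 * x2 * a * a * c * c + 2 * r1 * r1 * r1 * r1 * s2 * s2 * x0 * a * a * c * c - 2 * r1 * r1 * r1 * r1 * s0 * s2 * x2 * a * a * c * c - 2 * r0 * r2 * s1 * s2 * s2 * s2 * x1 * b * b * c * c + 2 * r0 * r2 * s1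 * s1 * s2 * s2 * x2 * b * b * c * c + 2 * r0 * r2 * s1 * s1 * s1 * s2 * x1 * b * b * c * c - 2 * r0 * r2 * s1 * s1 * s1 * s1 * x2 * b * b * c * c - 2 * r0 * r2 * s0 * s2 * s2 * s2 * x0 * b * b * c * c + 2 * r0 * r2 * s0 * s2 * s2 * s2 * x0 * a * a * d * d + 2 * r0 * r2 * s0 * s1 * s1 * s2 * x0 * b * b * c * c - 2 * r0 * r2 * s0 * s1 * s1 * s2 * x0 * a * a * d * d + 4 * r0 * r2 * s0 * s0 * s2 * s2 * x2 * b * b * c * c - 4 * r0 * r2 * s0 * s0 * s2 * s2 * x2 * a * a * d * d - 2 * r0 * r2 * s0 * s0 * s1 * s2 * x1 * b * b * c * c + 4 * r0 * r2 * s0 * s0 * s1 * s2 * x1 * a * a * d * d - 2 * r0 * r2 * s0 * s0 * s1 * s1 * x2 * b * b * c * c - 2 * r0 * r2 * s0 * s0 * s0 * s2 * x0 * b * b * c * c + 2 * r0 * r2 * s0 * s0 * s0 * s2 * x0 * a * a * d * d - 4 * r0 * r2 * r2 * s1 * s2 * s2 * x1 * a * b * c * c + 2 * r0 * r2 * r2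 * s1 * s1 * s2 * x2 * a * b * c * c + 2 * r0 * r2 * r2 * s1 * s1 * s2 * x2 * a * a * c * d + 2 * r0 * r2 * r2 * s1 * s1 * s1 * x1 * a * b * c * c - 2 * r0 * r2 * r2 * s1 * s1 * s1 * x1 * a * a * c * d - 4 * r0 * r2 * r2 * s0 * s2 * s2 * x0 * a * b * c * c + 4 * r0 * r2 * r2 * s0 * s2 * s2 * x0 * a * a * c * d + 6 * r0 * r2 * r2 * s0 * s1 * s1 * x0 * a * b * c * c - 2 * r0 * r2 * r2 * s0 * s1 * s1 * x0 * a * a * c * d + 2 * r0 * r2 * r2 * s0 * s0 * s2 * x2 * a * b * c * c - 2 * r0 * r2 * r2 * s0 * s0 * s2 * x2 * a * a * c * d - 2 * r0 * r2 * r2 * s0 * s0 * s1 * x1 * a * b * c * c - 2 * r0 * r2 * r2 * s0 * s0 * s1 * x1 * a * a * c * d + 2 * r0 * r2 * r2 * s0 * s0 * s0 * x0 * a * b * c * c - 2 * r0 * r2 * r2 * s0 * s0 * s0 * x0 * a * a * c * d - 2 * r0 * r2 * r2 * r2 * s1 * s2 * x1 * a * a * c * c + 2 * r0 * r2 * r2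 * r2 * s1 * s1 * x2 * a * a * c * c + 2 * r0 * r1 * s2 * s2 * s2 * s2 * x1 * b * b * c * c - 2 * r0 * r1 * s1 * s2 * s2 * s2 * x2 * b * b * c * c - 2 * r0 * r1 * s1 * s1 * s2 * s2 * x1 * b * b * c * c + 2 * r0 * r1 * s1 * s1 * s1 * s2 * x2 * b * b * c * c + 2 * r0 * r1 * s0 * s1 * s2 * s2 * x0 * b * b * c * c - 2 * r0 * r1 * s0 * s1 * s2 * s2 * x0 * a * a * d * d - 2 * r0 * r1 * s0 * s1 * s1 * s1 * x0 * b * b * c * c + 2 * r0 * r1 * s0 * s1 * s1 * s1 * x0 * a * a * d * d - 2 * r0 * r1 * s0 * s0 * s2 * s2 * x1 * b * b * c * c - 2 * r0 * r1 * s0 * s0 * s1 * s2 * x2 * b * b * c * c + 4 * r0 * r1 * s0 * s0 * s1 * s2 * x2 * a * a * d * d + 4 * r0 * r1 * s0 * s0 * s1 * s1 * x1 * b * b * c * c - 4 * r0 * r1 * s0 * s0 * s1 * s1 * x1 * a * a * d * d + 2 * r0 * r1 * s0 * s0 * s0 * s1 * x0 * b * b * c * c - 2 * r0 * r1 * s0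 * s0 * s0 * s1 * x0 * a * a * d * d + 4 * r0 * r1 * r2 * s2 * s2 * s2 * x1 * a * b * c * c - 4 * r0 * r1 * r2 * s1 * s2 * s2 * x2 * a * a * c * d + 4 * r0 * r1 * r2 * s1 * s1 * s2 * x1 * a * a * c * d - 4 * r0 * r1 * r2 * s1 * s1 * s1 * x2 * a * b * c * c - 4 * r0 * r1 * r2 * s0 * s1 * s2 * x0 * a * b * c * c - 4 * r0 * r1 * r2 * s0 * s1 * s2 * x0 * a * a * c * d + 4 * r0 * r1 * r2 * s0 * s0 * s2 * x1 * a * a * c * d + 4 * r0 * r1 * r2 * s0 * s0 * s1 * x2 * a * a * c * d + 2 * r0 * r1 * r2 * r2 * s2 * s2 * x1 * a * a * c * c - 2 * r0 * r1 * r2 * r2 * s1 * s2 * x2 * a * a * c * c - 2 * r0 * r1 * r1 * s2 * s2 * s2 * x2 * a * b * c * c + 2 * r0 * r1 * r1 * s2 * s2 * s2 * x2 * a * a * c * d - 2 * r0 * r1 * r1 * s1 * s2 * s2 * x1 * a * b * c * c - 2 * r0 * r1 * r1 * s1 * s2 * s2 * x1 * a * a * c * d + 4 * r0 * r1 * r1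 * s1 * s1 * s2 * x2 * a * b * c * c + 6 * r0 * r1 * r1 * s0 * s2 * s2 * x0 * a * b * c * c - 2 * r0 * r1 * r1 * s0 * s2 * s2 * x0 * a * a * c * d - 4 * r0 * r1 * r1 * s0 * s1 * s1 * x0 * a * b * c * c + 4 * r0 * r1 * r1 * s0 * s1 * s1 * x0 * a * a * c * d - 2 * r0 * r1 * r1 * s0 * s0 * s2 * x2 * a * b * c * c - 2 * r0 * r1 * r1 * s0 * s0 * s2 * x2 * a * a * c * d + 2 * r0 * r1 * r1 * s0 * s0 * s1 * x1 * a * b * c * c - 2 * r0 * r1 * r1 * s0 * s0 * s1 * x1 * a * a * c * d - 2 * r0 * r1 * r1 * s0 * s0 * s0 * x0 * a * b * c * c + 2 * r0 * r1 * r1 * s0 * s0 * s0 * x0 * a * a * c * d + 2 * r0 * r1 * r1 * r2 * s1 * s2 * x1 * a * a * c * c - 2 * r0 * r1 * r1 * r2 * s1 * s1 * x2 * a * a * c * c - 2 * r0 * r1 * r1 * r1 * s2 * s2 * x1 * a * a * c * c + 2 * r0 * r1 * r1 * r1 * s1 * s2 * x2 * a * a * c * c + r0 * r0 * s2 * s2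 * s2 * s2 * x0 * b * b * c * c - r0 * r0 * s2 * s2 * s2 * s2 * x0 * a * a * d * d - 2 * r0 * r0 * s1 * s1 * s2 * s2 * x0 * b * b * c * c + 2 * r0 * r0 * s1 * s1 * s2 * s2 * x0 * a * a * d * d + r0 * r0 * s1 * s1 * s1 * s1 * x0 * b * b * c * c - r0 * r0 * s1 * s1 * s1 * s1 * x0 * a * a * d * d - 2 * r0 * r0 * s0 * s2 * s2 * s2 * x2 * b * b * c * c + 2 * r0 * r0 * s0 * s2 * s2 * s2 * x2 * a * a * d * d + 2 * r0 * r0 * s0 * s1 * s2 * s2 * x1 * b * b * c * c - 2 * r0 * r0 * s0 * s1 * s2 * s2 * x1 * a * a * d * d + 2 * r0 * r0 * s0 * s1 * s1 * s2 * x2 * b * b * c * c - 2 * r0 * r0 * s0 * s1 * s1 * s2 * x2 * a * a * d * d - 2 * r0 * r0 * s0 * s1 * s1 * s1 * x1 * b * b * c * c + 2 * r0 * r0 * s0 * s1 * s1 * s1 * x1 * a * a * d * d + r0 * r0 * s0 * s0 * s2 * s2 * x0 * b * b * c * c - r0 * r0 * s0 * s0 * s2 * s2 * x0 * a * a * d *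 d - r0 * r0 * s0 * s0 * s1 * s1 * x0 * b * b * c * c + r0 * r0 * s0 * s0 * s1 * s1 * x0 * a * a * d * d + 2 * r0 * r0 * r2 * s2 * s2 * s2 * x0 * a * b * c * c - 2 * r0 * r0 * r2 * s2 * s2 * s2 * x0 * a * a * c * d - 2 * r0 * r0 * r2 * s1 * s1 * s2 * x0 * a * b * c * c + 2 * r0 * r0 * r2 * s1 * s1 * s2 * x0 * a * a * c * d + 2 * r0 * r0 * r2 * s0 * s2 * s2 * x2 * a * b * c * c - 2 * r0 * r0 * r2 * s0 * s2 * s2 * x2 * a * a * c * d + 4 * r0 * r0 * r2 * s0 * s1 * s2 * x1 * a * a * c * d - 2 * r0 * r0 * r2 * s0 * s1 * s1 * x2 * a * b * c * c - 2 * r0 * r0 * r2 * s0 * s1 * s1 * x2 * a * a * c * d - 4 * r0 * r0 * r2 * s0 * s0 * s2 * x0 * a * b * c * c + 4 * r0 * r0 * r2 * s0 * s0 * s2 * x0 * a * a * c * d + 2 * r0 * r0 * r2 * r2 * s1 * s1 * x0 * a * a * c * c - 2 * r0 * r0 * r2 * r2 * s0 * s1 * x1 * a * a * c * c - 2 * r0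 * r0 * r1 * s1 * s2 * s2 * x0 * a * b * c * c + 2 * r0 * r0 * r1 * s1 * s2 * s2 * x0 * a * a * c * d + 2 * r0 * r0 * r1 * s1 * s1 * s1 * x0 * a * b * c * c - 2 * r0 * r0 * r1 * s1 * s1 * s1 * x0 * a * a * c * d - 2 * r0 * r0 * r1 * s0 * s2 * s2 * x1 * a * b * c * c - 2 * r0 * r0 * r1 * s0 * s2 * s2 * x1 * a * a * c * d + 4 * r0 * r0 * r1 * s0 * s1 * s2 * x2 * a * a * c * d + 2 * r0 * r0 * r1 * s0 * s1 * s1 * x1 * a * b * c * c - 2 * r0 * r0 * r1 * s0 * s1 * s1 * x1 * a * a * c * d + 4 * r0 * r0 * r1 * s0 * s0 * s1 * x0 * a * b * c * c - 4 * r0 * r0 * r1 * s0 * s0 * s1 * x0 * a * a * c * d - 4 * r0 * r0 * r1 * r2 * s1 * s2 * x0 * a * a * c * c + 2 * r0 * r0 * r1 * r2 * s0 * s2 * x1 * a * a * c * c + 2 * r0 * r0 * r1 * r2 * s0 * s1 * x2 * a * a * c * c + 2 * r0 * r0 * r1 * r1 * s2 * s2 * x0 * a * a * c * c - 2 * r0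 * r0 * r1 * r1 * s0 * s2 * x2 * a * a * c * c - 2 * r0 * r0 * r0 * s2 * s2 * s2 * x2 * a * b * c * c + 2 * r0 * r0 * r0 * s2 * s2 * s2 * x2 * a * a * c * d + 2 * r0 * r0 * r0 * s1 * s2 * s2 * x1 * a * b * c * c - 2 * r0 * r0 * r0 * s1 * s2 * s2 * x1 * a * a * c * d + 2 * r0 * r0 * r0 * s1 * s1 * s2 * x2 * a * b * c * c - 2 * r0 * r0 * r0 * s1 * s1 * s2 * x2 * a * a * c * d - 2 * r0 * r0 * r0 * s1 * s1 * s1 * x1 * a * b * c * c + 2 * r0 * r0 * r0 * s1 * s1 * s1 * x1 * a * a * c * d + 2 * r0 * r0 * r0 * s0 * s2 * s2 * x0 * a * b * c * c - 2 * r0 * r0 * r0 * s0 * s2 * s2 * x0 * a * a * c * d - 2 * r0 * r0 * r0 * s0 * s1 * s1 * x0 * a * b * c * c + 2 * r0 * r0 * r0 * s0 * s1 * s1 * x0 * a * a * c * d + 2 * r0 * r0 * r0 * r2 * s1 * s2 * x1 * a * a * c * c - 2 * r0 * r0 * r0 * r2 * s1 * s1 * x2 * a * a * c * c - 2 * r0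 * r0 * r0 * r1 * s2 * s2 * x1 * a * a * c * c + 2 * r0 * r0 * r0 * r1 * s1 * s2 * x2 * a * a * c * c) = 0 := by
  linear_combination (s1 * s1 * s2 * s2 * x0 * b * b * c * c + s1 * s1 * s2 * s2 * x0 * a * a * d * d - s1 * s1 * s1 * s1 * x0 * b * b * c * c - s1 * s1 * s1 * s1 * x0 * a * a * d * d - 2 * s0 * s1 * s2 * s2 * x1 * b * b * c * c + 2 * s0 * s1 * s1 * s2 * x2 * b * b * c * c - 2 * s0 * s1 * s1 * s2 * x2 * a * a * d * d + 2 * s0 * s1 * s1 * s1 * x1 * a * a * d * d - s0 * s0 * s2 * s2 * x0 * b * b * c * c + s0 * s0 * s2 * s2 * x0 * a * a * d * d - 2 * s0 * s0 * s1 * s1 * x0 * b * b * c * c + 2 * s0 * s0 * s0 * s2 * x2 * b * b * c * c - 2 * s0 * s0 * s0 * s2 * x2 * a * a * d * d + 2 * s0 * s0 * s0 * s1 * x1 * a * a * d * d - s0 * s0 * s0 * s0 * x0 * b * b * c * c + s0 * s0 * s0 * s0 * x0 * a * a * d * d + 2 * r2 * s1 * s1 * s2 * x0 * a * b * c * c +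 2 * r2 * s1 * s1 * s2 * x0 * a * a * c * d - 4 * r2 * s0 * s1 * s2 * x1 * a * b * c * c + 2 * r2 * s0 * s1 * s1 * x2 * a * b * c * c - 2 * r2 * s0 * s1 * s1 * x2 * a * a * c * d - 2 * r2 * s0 * s0 * s2 * x0 * a * b * c * c + 2 * r2 * s0 * s0 * s2 * x0 * a * a * c * d + 2 * r2 * s0 * s0 * s0 * x2 * a * b * c * c - 2 * r2 * s0 * s0 * s0 * x2 * a * a * c * d + 2 * r2 * r2 * s1 * s1 * x0 * a * a * c * c - 2 * r2 * r2 * s0 * s1 * x1 * a * a * c * c - 4 * r1 * s1 * s2 * s2 * x0 * a * b * c * c - 4 * r1 * s1 * s2 * s2 * x0 * a * a * c * d - 2 * r1 * s1 * s1 * s1 * x0 * a * b * c * c - 2 * r1 * s1 * s1 * s1 * x0 * a * a * c * d + 4 * r1 * s0 * s2 * s2 * x1 * a * b * c * c + 4 * r1 * s0 * s1 * s2 * x2 * a * a * c * d + 2 * r1 * s0 * s1 * s1 * x1 * a * b * c * c + 2 * r1 * s0 * s1 * s1 * x1 * a * a * c * d + 2 * r1 * s0 * s0 * s1 * x0 *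 a * b * c * c - 2 * r1 * s0 * s0 * s1 * x0 * a * a * c * d - 2 * r1 * s0 * s0 * s0 * x1 * a * b * c * c + 2 * r1 * s0 * s0 * s0 * x1 * a * a * c * d - 4 * r1 * r2 * s1 * s2 * x0 * a * a * c * c + 2 * r1 * r2 * s0 * s2 * x1 * a * a * c * c + 2 * r1 * r2 * s0 * s1 * x2 * a * a * c * c + 2 * r1 * r1 * s2 * s2 * x0 * a * a * c * c - 2 * r1 * r1 * s0 * s2 * x2 * a * a * c * c + 4 * r0 * s1 * s2 * s2 * x1 * a * b * c * c - 2 * r0 * s1 * s1 * s2 * x2 * a * b * c * c - 2 * r0 * s1 * s1 * s2 * x2 * a * a * c * d - 2 * r0 * s1 * s1 * s1 * x1 * a * b * c * c + 2 * r0 * s1 * s1 * s1 * x1 * a * a * c * d + 4 * r0 * s0 * s2 * s2 * x0 * a * b * c * c - 4 * r0 * s0 * s2 * s2 * x0 * a * a * c * d - 6 * r0 * s0 * s1 * s1 * x0 * a * b * c * c + 2 * r0 * s0 * s1 * s1 * x0 * a * a * c * d - 2 * r0 * s0 * s0 * s2 * x2 * a * b * c * c + 2 * r0 * s0 * s0 *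 s2 * x2 * a * a * c * d + 2 * r0 * s0 * s0 * s1 * x1 * a * b * c * c + 2 * r0 * s0 * s0 * s1 * x1 * a * a * c * d - 2 * r0 * s0 * s0 * s0 * x0 * a * b * c * c + 2 * r0 * s0 * s0 * s0 * x0 * a * a * c * d + 2 * r0 * r2 * s1 * s2 * x1 * a * a * c * c - 2 * r0 * r2 * s1 * s1 * x2 * a * a * c * c - 2 * r0 * r1 * s2 * s2 * x1 * a * a * c * c + 2 * r0 * r1 * s1 * s2 * x2 * a * a * c * c) * hR + (-2 * r1 * r2 * s1 * s2 * x0 * b * b * c * c - 2 * r1 * r2 * s1 * s2 * x0 * a * a * d * d + 2 * r1 * r2 * s0 * s2 * x1 * b * b * c * c - 2 * r1 * r2 * s0 * s1 * x2 * b * b * c * c + 4 * r1 * r2 * s0 * s1 * x2 * a * a * d * d + r1 * r1 * s2 * s2 * x0 * b * b * c * c + r1 * r1 * s2 * s2 * x0 * a * a * d * d + r1 * r1 * s1 * s1 * x0 * b * b * c * c + r1 * r1 * s1 * s1 * x0 * a * a * d * d - 2 * r1 * r1 * s0 * s2 * x2 * a * a * d * d - 4 * r1 * r1 * s0 * s1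 * x1 * b * b * c * c + 2 * r1 * r1 * s0 * s1 * x1 * a * a * d * d - 2 * r1 * r1 * s0 * s0 * x0 * b * b * c * c + 2 * r1 * r1 * s0 * s0 * x0 * a * a * d * d + 2 * r1 * r1 * r2 * s2 * x0 * a * b * c * c + 2 * r1 * r1 * r2 * s2 * x0 * a * a * c * d - 2 * r1 * r1 * r2 * s0 * x2 * a * b * c * c - 2 * r1 * r1 * r2 * s0 * x2 * a * a * c * d - 6 * r1 * r1 * r1 * s1 * x0 * a * b * c * c - 6 * r1 * r1 * r1 * s1 * x0 * a * a * c * d + 2 * r1 * r1 * r1 * s0 * x1 * a * b * c * c + 2 * r1 * r1 * r1 * s0 * x1 * a * a * c * d + 2 * r0 * r2 * s1 * s2 * x1 * b * b * c * c - 2 * r0 * r2 * s1 * s1 * x2 * b * b * c * c + 2 * r0 * r2 * s0 * s2 * x0 * b * b * c * c - 2 * r0 * r2 * s0 * s2 * x0 * a * a * d * d - 4 * r0 * r2 * s0 * s0 * x2 * b * b * c * c + 4 * r0 * r2 * s0 * s0 * x2 * a * a * d * d - 2 * r0 * r1 * s2 * s2 * x1 * b * b * c * c + 2 * r0 * r1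 * s1 * s2 * x2 * b * b * c * c - 2 * r0 * r1 * s0 * s1 * x0 * b * b * c * c + 2 * r0 * r1 * s0 * s1 * x0 * a * a * d * d - 4 * r0 * r1 * r2 * s2 * x1 * a * b * c * c + 4 * r0 * r1 * r2 * s1 * x2 * a * a * c * d + 2 * r0 * r1 * r1 * s2 * x2 * a * b * c * c - 2 * r0 * r1 * r1 * s2 * x2 * a * a * c * d + 6 * r0 * r1 * r1 * s1 * x1 * a * b * c * c + 2 * r0 * r1 * r1 * s1 * x1 * a * a * c * d - 2 * r0 * r1 * r1 * s0 * x0 * a * b * c * c - 2 * r0 * r1 * r1 * s0 * x0 * a * a * c * d - r0 * r0 * s2 * s2 * x0 * b * b * c * c + r0 * r0 * s2 * s2 * x0 * a * a * d * d + 2 * r0 * r0 * s1 * s1 * x0 * b * b * c * c + 2 * r0 * r0 * s0 * s2 * x2 * b * b * c * c - 2 * r0 * r0 * s0 * s2 * x2 * a * a * d * d - 4 * r0 * r0 * s0 * s1 * x1 * b * b * c * c + 2 * r0 * r0 * s0 * s1 * x1 * a * a * d * d - 3 * r0 * r0 * s0 * s0 * x0 * b * b * c * c + 3 * r0 * r0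 * s0 * s0 * x0 * a * a * d * d - 2 * r0 * r0 * r2 * s2 * x0 * a * b * c * c + 2 * r0 * r0 * r2 * s2 * x0 * a * a * c * d - 2 * r0 * r0 * r2 * s0 * x2 * a * b * c * c + 2 * r0 * r0 * r2 * s0 * x2 * a * a * c * d - 2 * r0 * r0 * r1 * s1 * x0 * a * b * c * c - 6 * r0 * r0 * r1 * s1 * x0 * a * a * c * d + 6 * r0 * r0 * r1 * s0 * x1 * a * b * c * c + 2 * r0 * r0 * r1 * s0 * x1 * a * a * c * d + 2 * r0 * r0 * r0 * s2 * x2 * a * b * c * c - 2 * r0 * r0 * r0 * s2 * x2 * a * a * c * d + 2 * r0 * r0 * r0 * s1 * x1 * a * b * c * c + 2 * r0 * r0 * r0 * s1 * x1 * a * a * c * d + 2 * r0 * r0 * r0 * s0 * x0 * a * b * c * c - 2 * r0 * r0 * r0 * s0 * x0 * a * a * c * d) * hS + (-4 * r1 * r2 * s0 * s1 * s1 * s2 * x1 * b * c + 4 * r1 * r2 * s0 * s1 * s1 * s2 * x1 * a * d + 4 * r1 * r2 * s0 * s1 * s1 * s1 * x2 * b * c - 4 * r1 * r2 * s0 * s1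 * s1 * s1 * x2 * a * d - 4 * r1 * r2 * s0 * s0 * s1 * s2 * x0 * b * c + 4 * r1 * r2 * s0 * s0 * s1 * s2 * x0 * a * d + 4 * r1 * r2 * s0 * s0 * s0 * s1 * x2 * b * c - 4 * r1 * r2 * s0 * s0 * s0 * s1 * x2 * a * d - 4 * r1 * r1 * s0 * s1 * s1 * s2 * x2 * b * c + 4 * r1 * r1 * s0 * s1 * s1 * s2 * x2 * a * d + 4 * r1 * r1 * s0 * s1 * s1 * s1 * x1 * b * c - 4 * r1 * r1 * s0 * s1 * s1 * s1 * x1 * a * d + 4 * r1 * r1 * s0 * s0 * s1 * s1 * x0 * b * c - 4 * r1 * r1 * s0 * s0 * s1 * s1 * x0 * a * d - 2 * r1 * r1 * s0 * s0 * s0 * s2 * x2 * b * c + 2 * r1 * r1 * s0 * s0 * s0 * s2 * x2 * a * d + 2 * r1 * r1 * s0 * s0 * s0 * s1 * x1 * b * c - 2 * r1 * r1 * s0 * s0 * s0 * s1 * x1 * a * d + 2 * r1 * r1 * s0 * s0 * s0 * s0 * x0 * b * c - 2 * r1 * r1 * s0 * s0 * s0 * s0 * x0 * a * d - 8 * r1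 * r1 * r2 * s1 * s1 * s2 * x0 * a * c + 4 * r1 * r1 * r2 * s0 * s1 * s2 * x1 * a * c + 4 * r1 * r1 * r2 * s0 * s1 * s1 * x2 * a * c - 2 * r1 * r1 * r2 * s0 * s0 * s2 * x0 * a * c + 2 * r1 * r1 * r2 * s0 * s0 * s0 * x2 * a * c + 8 * r1 * r1 * r1 * s1 * s1 * s1 * x0 * a * c - 4 * r1 * r1 * r1 * s0 * s1 * s2 * x2 * a * c - 4 * r1 * r1 * r1 * s0 * s1 * s1 * x1 * a * c + 6 * r1 * r1 * r1 * s0 * s0 * s1 * x0 * a * c - 2 * r1 * r1 * r1 * s0 * s0 * s0 * x1 * a * c - 4 * r0 * r2 * s0 * s0 * s1 * s2 * x1 * b * c + 4 * r0 * r2 * s0 * s0 * s1 * s2 * x1 * a * d + 4 * r0 * r2 * s0 * s0 * s1 * s1 * x2 * b * c - 4 * r0 * r2 * s0 * s0 * s1 * s1 * x2 * a * d - 4 * r0 * r2 * s0 * s0 * s0 * s2 * x0 * b * c + 4 * r0 * r2 * s0 * s0 * s0 * s2 * x0 * a * d + 4 * r0 * r2 * s0 * s0 * s0 * s0 * x2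 * b * c - 4 * r0 * r2 * s0 * s0 * s0 * s0 * x2 * a * d - 4 * r0 * r1 * s0 * s0 * s1 * s2 * x2 * b * c + 4 * r0 * r1 * s0 * s0 * s1 * s2 * x2 * a * d + 4 * r0 * r1 * s0 * s0 * s1 * s1 * x1 * b * c - 4 * r0 * r1 * s0 * s0 * s1 * s1 * x1 * a * d + 4 * r0 * r1 * s0 * s0 * s0 * s1 * x0 * b * c - 4 * r0 * r1 * s0 * s0 * s0 * s1 * x0 * a * d + 4 * r0 * r1 * r2 * s1 * s1 * s2 * x1 * a * c - 4 * r0 * r1 * r2 * s1 * s1 * s1 * x2 * a * c - 4 * r0 * r1 * r2 * s0 * s1 * s2 * x0 * a * c + 4 * r0 * r1 * r2 * s0 * s0 * s2 * x1 * a * c + 4 * r0 * r1 * r1 * s1 * s1 * s2 * x2 * a * c - 4 * r0 * r1 * r1 * s1 * s1 * s1 * x1 * a * c + 4 * r0 * r1 * r1 * s0 * s1 * s1 * x0 * a * c - 2 * r0 * r1 * r1 * s0 * s0 * s2 * x2 * a * c - 6 * r0 * r1 * r1 * s0 * s0 * s1 * x1 * a * c + 2 * r0 * r1 * r1 * s0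 * s0 * s0 * x0 * a * c - 2 * r0 * r0 * s0 * s1 * s1 * s2 * x2 * b * c + 2 * r0 * r0 * s0 * s1 * s1 * s2 * x2 * a * d + 2 * r0 * r0 * s0 * s1 * s1 * s1 * x1 * b * c - 2 * r0 * r0 * s0 * s1 * s1 * s1 * x1 * a * d + 2 * r0 * r0 * s0 * s0 * s1 * s1 * x0 * b * c - 2 * r0 * r0 * s0 * s0 * s1 * s1 * x0 * a * d - 4 * r0 * r0 * s0 * s0 * s0 * s2 * x2 * b * c + 4 * r0 * r0 * s0 * s0 * s0 * s2 * x2 * a * d + 4 * r0 * r0 * s0 * s0 * s0 * s1 * x1 * b * c - 4 * r0 * r0 * s0 * s0 * s0 * s1 * x1 * a * d + 4 * r0 * r0 * s0 * s0 * s0 * s0 * x0 * b * c - 4 * r0 * r0 * s0 * s0 * s0 * s0 * x0 * a * d - 2 * r0 * r0 * r2 * s1 * s1 * s2 * x0 * a * c + 4 * r0 * r0 * r2 * s0 * s1 * s2 * x1 * a * c - 2 * r0 * r0 * r2 * s0 * s1 * s1 * x2 * a * c + 6 * r0 * r0 * r1 * s1 * s1 * s1 * x0 * a * c - 6 * r0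 * r0 * r1 * s0 * s1 * s1 * x1 * a * c + 4 * r0 * r0 * r1 * s0 * s0 * s1 * x0 * a * c - 4 * r0 * r0 * r1 * s0 * s0 * s0 * x1 * a * c + 2 * r0 * r0 * r0 * s1 * s1 * s2 * x2 * a * c - 2 * r0 * r0 * r0 * s1 * s1 * s1 * x1 * a * c + 2 * r0 * r0 * r0 * s0 * s1 * s1 * x0 * a * c - 4 * r0 * r0 * r0 * s0 * s0 * s1 * x1 * a * c) * h

set_option maxRecDepth 10000 in
set_option maxHeartbeats 4000000 in
lemma key1 (r0 r1 r2 s0 s1 s2 x0 x1 x2 a b c d : ℝ)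
    (hR : r0 * r0 + r1 * r1 - r2 * r2 = 0) (hS : s0 * s0 + s1 * s1 - s2 * s2 = 0)
    (h : a * d + b * c = 0) :
    (r2 * r2 * s1 * s1 * s2 * s2 * x1 * b * b * c * c - r2 * r2 * s1 * s1 * s2 * s2 * x1 * a * a * d * d - 2 * r2 * r2 * s1 * s1 * s1 * s2 * x2 * b * b * c * c + 2 * r2 * r2 * s1 * s1 * s1 * s2 * x2 * a * a * d * d + r2 * r2 * s1 * s1 * s1 * s1 * x1 * b * b * c * c - r2 * r2 * s1 * s1 * s1 * s1 * x1 * a * a * d * d + 2 * r2 * r2 * s0 * s1 * s2 * s2 * x0 * b * b * c * c - 2 * r2 * r2 * s0 * s1 * s1 * s1 * x0 * a * a * d * d - r2 * r2 * s0 * s0 * s2 * s2 * x1 * b * b * c * c - r2 * r2 * s0 * s0 * s2 * s2 * x1 * a * a * d * d - 2 * r2 * r2 * s0 * s0 * s1 * s2 * x2 * b * b * c * c + 2 * r2 * r2 * s0 * s0 * s1 * s2 * x2 * a * a * d * d + 2 * r2 * r2 * s0 * s0 * s1 * s1 * x1 * b * b * c * c - 2 * r2 * r2 * s0 * s0 *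 s0 * s1 * x0 * a * a * d * d + r2 * r2 * s0 * s0 * s0 * s0 * x1 * b * b * c * c + r2 * r2 * s0 * s0 * s0 * s0 * x1 * a * a * d * d + 2 * r2 * r2 * r2 * s1 * s1 * s2 * x1 * a * b * c * c - 2 * r2 * r2 * r2 * s1 * s1 * s2 * x1 * a * a * c * d - 2 * r2 * r2 * r2 * s1 * s1 * s1 * x2 * a * b * c * c + 2 * r2 * r2 * r2 * s1 * s1 * s1 * x2 * a * a * c * d + 4 * r2 * r2 * r2 * s0 * s1 * s2 * x0 * a * b * c * c - 2 * r2 * r2 * r2 * s0 * s0 * s2 * x1 * a * b * c * c - 2 * r2 * r2 * r2 * s0 * s0 * s2 * x1 * a * a * c * d - 2 * r2 * r2 * r2 * s0 * s0 * s1 * x2 * a * b * c * c + 2 * r2 * r2 * r2 * s0 * s0 * s1 * x2 * a * a * c * d + 2 * r2 * r2 * r2 * r2 * s0 * s1 * x0 * a * a * c * c - 2 * r2 * r2 * r2 * r2 * s0 * s0 * x1 * a * a * c * c - 2 * r1 * r2 * s1 * s2 * s2 * s2 * x1 * b * b * c * c + 2 * r1 * r2 * s1 * s2 * s2 * s2 *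 x1 * a * a * d * d + 4 * r1 * r2 * s1 * s1 * s2 * s2 * x2 * b * b * c * c - 4 * r1 * r2 * s1 * s1 * s2 * s2 * x2 * a * a * d * d - 2 * r1 * r2 * s1 * s1 * s1 * s2 * x1 * b * b * c * c + 2 * r1 * r2 * s1 * s1 * s1 * s2 * x1 * a * a * d * d - 2 * r1 * r2 * s0 * s2 * s2 * s2 * x0 * b * b * c * c - 2 * r1 * r2 * s0 * s1 * s1 * s2 * x0 * b * b * c * c + 4 * r1 * r2 * s0 * s1 * s1 * s2 * x0 * a * a * d * d + 2 * r1 * r2 * s0 * s0 * s2 * s2 * x2 * b * b * c * c + 2 * r1 * r2 * s0 * s0 * s1 * s2 * x1 * b * b * c * c - 2 * r1 * r2 * s0 * s0 * s1 * s2 * x1 * a * a * d * d - 2 * r1 * r2 * s0 * s0 * s1 * s1 * x2 * b * b * c * c + 2 * r1 * r2 * s0 * s0 * s0 * s2 * x0 * b * b * c * c - 2 * r1 * r2 * s0 * s0 * s0 * s0 * x2 * b * b * c * c - 4 * r1 * r2 * r2 * s1 * s2 * s2 * x1 * a * b * c * c + 4 * r1 * r2 * r2 * s1 * s2 * s2 *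 x1 * a * a * c * d + 2 * r1 * r2 * r2 * s1 * s1 * s2 * x2 * a * b * c * c - 2 * r1 * r2 * r2 * s1 * s1 * s2 * x2 * a * a * c * d + 2 * r1 * r2 * r2 * s1 * s1 * s1 * x1 * a * b * c * c - 2 * r1 * r2 * r2 * s1 * s1 * s1 * x1 * a * a * c * d - 4 * r1 * r2 * r2 * s0 * s2 * s2 * x0 * a * b * c * c - 2 * r1 * r2 * r2 * s0 * s1 * s1 * x0 * a * b * c * c - 2 * r1 * r2 * r2 * s0 * s1 * s1 * x0 * a * a * c * d + 2 * r1 * r2 * r2 * s0 * s0 * s2 * x2 * a * b * c * c + 2 * r1 * r2 * r2 * s0 * s0 * s2 * x2 * a * a * c * d + 6 * r1 * r2 * r2 * s0 * s0 * s1 * x1 * a * b * c * c - 2 * r1 * r2 * r2 * s0 * s0 * s1 * x1 * a * a * c * d + 2 * r1 * r2 * r2 * s0 * s0 * s0 * x0 * a * b * c * c - 2 * r1 * r2 * r2 * s0 * s0 * s0 * x0 * a * a * c * d - 2 * r1 * r2 * r2 * r2 * s0 * s2 * x0 * a * a * c * c + 2 * r1 * r2 * r2 * r2 * s0 * s0 *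 x2 * a * a * c * c + r1 * r1 * s2 * s2 * s2 * s2 * x1 * b * b * c * c - r1 * r1 * s2 * s2 * s2 * s2 * x1 * a * a * d * d - 2 * r1 * r1 * s1 * s2 * s2 * s2 * x2 * b * b * c * c + 2 * r1 * r1 * s1 * s2 * s2 * s2 * x2 * a * a * d * d + r1 * r1 * s1 * s1 * s2 * s2 * x1 * b * b * c * c - r1 * r1 * s1 * s1 * s2 * s2 * x1 * a * a * d * d + 2 * r1 * r1 * s0 * s1 * s2 * s2 * x0 * b * b * c * c - 2 * r1 * r1 * s0 * s1 * s2 * s2 * x0 * a * a * d * d - 2 * r1 * r1 * s0 * s0 * s2 * s2 * x1 * b * b * c * c + 2 * r1 * r1 * s0 * s0 * s2 * s2 * x1 * a * a * d * d + 2 * r1 * r1 * s0 * s0 * s1 * s2 * x2 * b * b * c * c - 2 * r1 * r1 * s0 * s0 * s1 * s2 * x2 * a * a * d * d - r1 * r1 * s0 * s0 * s1 * s1 * x1 * b * b * c * c + r1 * r1 * s0 * s0 * s1 * s1 * x1 * a * a * d * d - 2 * r1 * r1 * s0 * s0 * s0 * s1 * x0 * b * b * c * c + 2 * r1 * r1 *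 s0 * s0 * s0 * s1 * x0 * a * a * d * d + r1 * r1 * s0 * s0 * s0 * s0 * x1 * b * b * c * c - r1 * r1 * s0 * s0 * s0 * s0 * x1 * a * a * d * d + 2 * r1 * r1 * r2 * s2 * s2 * s2 * x1 * a * b * c * c - 2 * r1 * r1 * r2 * s2 * s2 * s2 * x1 * a * a * c * d + 2 * r1 * r1 * r2 * s1 * s2 * s2 * x2 * a * b * c * c - 2 * r1 * r1 * r2 * s1 * s2 * s2 * x2 * a * a * c * d - 4 * r1 * r1 * r2 * s1 * s1 * s2 * x1 * a * b * c * c + 4 * r1 * r1 * r2 * s1 * s1 * s2 * x1 * a * a * c * d + 4 * r1 * r1 * r2 * s0 * s1 * s2 * x0 * a * a * c * d - 2 * r1 * r1 * r2 * s0 * s0 * s2 * x1 * a * b * c * c + 2 * r1 * r1 * r2 * s0 * s0 * s2 * x1 * a * a * c * d - 2 * r1 * r1 * r2 * s0 * s0 * s1 * x2 * a * b * c * c - 2 * r1 * r1 * r2 * s0 * s0 * s1 * x2 * a * a * c * d - 2 * r1 * r1 * r2 * r2 * s0 * s1 * x0 * a * a * c * c + 2 * r1 * r1 * r2 * r2 *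 s0 * s0 * x1 * a * a * c * c - 2 * r1 * r1 * r1 * s2 * s2 * s2 * x2 * a * b * c * c + 2 * r1 * r1 * r1 * s2 * s2 * s2 * x2 * a * a * c * d + 2 * r1 * r1 * r1 * s1 * s2 * s2 * x1 * a * b * c * c - 2 * r1 * r1 * r1 * s1 * s2 * s2 * x1 * a * a * c * d + 2 * r1 * r1 * r1 * s0 * s2 * s2 * x0 * a * b * c * c - 2 * r1 * r1 * r1 * s0 * s2 * s2 * x0 * a * a * c * d + 2 * r1 * r1 * r1 * s0 * s0 * s2 * x2 * a * b * c * c - 2 * r1 * r1 * r1 * s0 * s0 * s2 * x2 * a * a * c * d - 2 * r1 * r1 * r1 * s0 * s0 * s1 * x1 * a * b * c * c + 2 * r1 * r1 * r1 * s0 * s0 * s1 * x1 * a * a * c * d - 2 * r1 * r1 * r1 * s0 * s0 * s0 * x0 * a * b * c * c + 2 * r1 * r1 * r1 * s0 * s0 * s0 * x0 * a * a * c * d + 2 * r1 * r1 * r1 * r2 * s0 * s2 * x0 * a * a * c * c - 2 * r1 * r1 * r1 * r2 * s0 * s0 * x2 * a * a * c * c - 2 * r0 * r2 * s1 * s2 *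 s2 * s2 * x0 * b * b * c * c + 2 * r0 * r2 * s1 * s1 * s1 * s2 * x0 * b * b * c * c + 2 * r0 * r2 * s0 * s2 * s2 * s2 * x1 * b * b * c * c + 2 * r0 * r2 * s0 * s2 * s2 * s2 * x1 * a * a * d * d + 2 * r0 * r2 * s0 * s1 * s2 * s2 * x2 * b * b * c * c - 4 * r0 * r2 * s0 * s1 * s2 * s2 * x2 * a * a * d * d - 6 * r0 * r2 * s0 * s1 * s1 * s2 * x1 * b * b * c * c + 2 * r0 * r2 * s0 * s1 * s1 * s2 * x1 * a * a * d * d + 2 * r0 * r2 * s0 * s1 * s1 * s1 * x2 * b * b * c * c - 2 * r0 * r2 * s0 * s0 * s1 * s2 * x0 * b * b * c * c + 4 * r0 * r2 * s0 * s0 * s1 * s2 * x0 * a * a * d * d - 2 * r0 * r2 * s0 * s0 * s0 * s2 * x1 * b * b * c * c - 2 * r0 * r2 * s0 * s0 * s0 * s2 * x1 * a * a * d * d + 2 * r0 * r2 * s0 * s0 * s0 * s1 * x2 * b * b * c * c - 4 * r0 * r2 * r2 * s1 * s2 * s2 * x0 * a * b * c * c + 2 * r0 * r2 * r2 * s1 *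 s1 * s1 * x0 * a * b * c * c - 2 * r0 * r2 * r2 * s1 * s1 * s1 * x0 * a * a * c * d + 4 * r0 * r2 * r2 * s0 * s2 * s2 * x1 * a * b * c * c + 4 * r0 * r2 * r2 * s0 * s2 * s2 * x1 * a * a * c * d - 4 * r0 * r2 * r2 * s0 * s1 * s2 * x2 * a * a * c * d - 2 * r0 * r2 * r2 * s0 * s1 * s1 * x1 * a * b * c * c + 2 * r0 * r2 * r2 * s0 * s1 * s1 * x1 * a * a * c * d - 2 * r0 * r2 * r2 * s0 * s0 * s1 * x0 * a * b * c * c - 2 * r0 * r2 * r2 * s0 * s0 * s1 * x0 * a * a * c * d + 2 * r0 * r2 * r2 * s0 * s0 * s0 * x1 * a * b * c * c + 2 * r0 * r2 * r2 * s0 * s0 * s0 * x1 * a * a * c * d - 2 * r0 * r2 * r2 * r2 * s1 * s2 * x0 * a * a * c * c + 4 * r0 * r2 * r2 * r2 * s0 * s2 * x1 * a * a * c * c - 2 * r0 * r2 * r2 * r2 * s0 * s1 * x2 * a * a * c * c + 2 * r0 * r1 * s2 * s2 * s2 * s2 * x0 * b * b * c * c - 2 * r0 * r1 * s1 * s1 *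 s2 * s2 * x0 * b * b * c * c - 2 * r0 * r1 * s0 * s2 * s2 * s2 * x2 * b * b * c * c + 2 * r0 * r1 * s0 * s1 * s2 * s2 * x1 * b * b * c * c - 2 * r0 * r1 * s0 * s1 * s2 * s2 * x1 * a * a * d * d - 2 * r0 * r1 * s0 * s1 * s1 * s2 * x2 * b * b * c * c + 4 * r0 * r1 * s0 * s1 * s1 * s2 * x2 * a * a * d * d + 2 * r0 * r1 * s0 * s1 * s1 * s1 * x1 * b * b * c * c - 2 * r0 * r1 * s0 * s1 * s1 * s1 * x1 * a * a * d * d - 2 * r0 * r1 * s0 * s0 * s2 * s2 * x0 * b * b * c * c + 4 * r0 * r1 * s0 * s0 * s1 * s1 * x0 * b * b * c * c - 4 * r0 * r1 * s0 * s0 * s1 * s1 * x0 * a * a * d * d + 2 * r0 * r1 * s0 * s0 * s0 * s2 * x2 * b * b * c * c - 2 * r0 * r1 * s0 * s0 * s0 * s1 * x1 * b * b * c * c + 2 * r0 * r1 * s0 * s0 * s0 * s1 * x1 * a * a * d * d + 4 * r0 * r1 * r2 * s2 * s2 * s2 * x0 * a * b * c * c + 4 * r0 * r1 * r2 * s1 *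 s1 * s2 * x0 * a * a * c * d - 4 * r0 * r1 * r2 * s0 * s2 * s2 * x2 * a * a * c * d - 4 * r0 * r1 * r2 * s0 * s1 * s2 * x1 * a * b * c * c - 4 * r0 * r1 * r2 * s0 * s1 * s2 * x1 * a * a * c * d + 4 * r0 * r1 * r2 * s0 * s1 * s1 * x2 * a * a * c * d + 4 * r0 * r1 * r2 * s0 * s0 * s2 * x0 * a * a * c * d - 4 * r0 * r1 * r2 * s0 * s0 * s0 * x2 * a * b * c * c + 2 * r0 * r1 * r2 * r2 * s2 * s2 * x0 * a * a * c * c - 2 * r0 * r1 * r2 * r2 * s0 * s2 * x2 * a * a * c * c - 2 * r0 * r1 * r1 * s1 * s2 * s2 * x0 * a * b * c * c - 2 * r0 * r1 * r1 * s1 * s2 * s2 * x0 * a * a * c * d - 2 * r0 * r1 * r1 * s0 * s2 * s2 * x1 * a * b * c * c + 2 * r0 * r1 * r1 * s0 * s2 * s2 * x1 * a * a * c * d + 4 * r0 * r1 * r1 * s0 * s1 * s2 * x2 * a * a * c * d + 4 * r0 * r1 * r1 * s0 * s1 * s1 * x1 * a * b * c * c - 4 * r0 * r1 * r1 * s0 *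 s1 * s1 * x1 * a * a * c * d + 2 * r0 * r1 * r1 * s0 * s0 * s1 * x0 * a * b * c * c - 2 * r0 * r1 * r1 * s0 * s0 * s1 * x0 * a * a * c * d + 2 * r0 * r1 * r1 * s0 * s0 * s0 * x1 * a * b * c * c - 2 * r0 * r1 * r1 * s0 * s0 * s0 * x1 * a * a * c * d + 2 * r0 * r1 * r1 * r2 * s1 * s2 * x0 * a * a * c * c - 4 * r0 * r1 * r1 * r2 * s0 * s2 * x1 * a * a * c * c + 2 * r0 * r1 * r1 * r2 * s0 * s1 * x2 * a * a * c * c - 2 * r0 * r1 * r1 * r1 * s2 * s2 * x0 * a * a * c * c + 2 * r0 * r1 * r1 * r1 * s0 * s2 * x2 * a * a * c * c - r0 * r0 * s2 * s2 * s2 * s2 * x1 * b * b * c * c - r0 * r0 * s2 * s2 * s2 * s2 * x1 * a * a * d * d + 2 * r0 * r0 * s1 * s2 * s2 * s2 * x2 * a * a * d * d + 2 * r0 * r0 * s1 * s1 * s2 * s2 * x1 * b * b * c * c - 2 * r0 * r0 * s1 * s1 * s1 * s2 * x2 * a * a * d * d - r0 * r0 * s1 * s1 * s1 * s1 * x1 *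 b * b * c * c + r0 * r0 * s1 * s1 * s1 * s1 * x1 * a * a * d * d + 2 * r0 * r0 * s0 * s1 * s2 * s2 * x0 * b * b * c * c - 2 * r0 * r0 * s0 * s1 * s2 * s2 * x0 * a * a * d * d - 2 * r0 * r0 * s0 * s1 * s1 * s1 * x0 * b * b * c * c + 2 * r0 * r0 * s0 * s1 * s1 * s1 * x0 * a * a * d * d + r0 * r0 * s0 * s0 * s2 * s2 * x1 * b * b * c * c + r0 * r0 * s0 * s0 * s2 * s2 * x1 * a * a * d * d - 2 * r0 * r0 * s0 * s0 * s1 * s2 * x2 * b * b * c * c + r0 * r0 * s0 * s0 * s1 * s1 * x1 * b * b * c * c - r0 * r0 * s0 * s0 * s1 * s1 * x1 * a * a * d * d - 2 * r0 * r0 * r2 * s2 * s2 * s2 * x1 * a * b * c * c - 2 * r0 * r0 * r2 * s2 * s2 * s2 * x1 * a * a * c * d + 2 * r0 * r0 * r2 * s1 * s2 * s2 * x2 * a * b * c * c + 2 * r0 * r0 * r2 * s1 * s2 * s2 * x2 * a * a * c * d - 2 * r0 * r0 * r2 * s1 * s1 * s2 * x1 * a * b * c * c + 2 * r0 * r0 *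 r2 * s1 * s1 * s2 * x1 * a * a * c * d + 2 * r0 * r0 * r2 * s1 * s1 * s1 * x2 * a * b * c * c - 2 * r0 * r0 * r2 * s1 * s1 * s1 * x2 * a * a * c * d + 4 * r0 * r0 * r2 * s0 * s1 * s2 * x0 * a * a * c * d - 4 * r0 * r0 * r2 * s0 * s0 * s2 * x1 * a * b * c * c - 4 * r0 * r0 * r2 * s0 * s0 * s2 * x1 * a * a * c * d + 4 * r0 * r0 * r2 * s0 * s0 * s1 * x2 * a * b * c * c - 2 * r0 * r0 * r2 * r2 * s2 * s2 * x1 * a * a * c * c + 2 * r0 * r0 * r2 * r2 * s1 * s2 * x2 * a * a * c * c - 2 * r0 * r0 * r2 * r2 * s0 * s1 * x0 * a * a * c * c + 2 * r0 * r0 * r2 * r2 * s0 * s0 * x1 * a * a * c * c - 2 * r0 * r0 * r1 * s2 * s2 * s2 * x2 * a * b * c * c + 2 * r0 * r0 * r1 * s2 * s2 * s2 * x2 * a * a * c * d + 6 * r0 * r0 * r1 * s1 * s2 * s2 * x1 * a * b * c * c - 2 * r0 * r0 * r1 * s1 * s2 * s2 * x1 * a * a * c * d - 2 * r0 * r0 *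 r1 * s1 * s1 * s2 * x2 * a * b * c * c - 2 * r0 * r0 * r1 * s1 * s1 * s2 * x2 * a * a * c * d - 2 * r0 * r0 * r1 * s1 * s1 * s1 * x1 * a * b * c * c + 2 * r0 * r0 * r1 * s1 * s1 * s1 * x1 * a * a * c * d - 2 * r0 * r0 * r1 * s0 * s2 * s2 * x0 * a * b * c * c - 2 * r0 * r0 * r1 * s0 * s2 * s2 * x0 * a * a * c * d + 2 * r0 * r0 * r1 * s0 * s1 * s1 * x0 * a * b * c * c - 2 * r0 * r0 * r1 * s0 * s1 * s1 * x0 * a * a * c * d + 4 * r0 * r0 * r1 * s0 * s0 * s2 * x2 * a * b * c * c - 4 * r0 * r0 * r1 * s0 * s0 * s1 * x1 * a * b * c * c + 4 * r0 * r0 * r1 * s0 * s0 * s1 * x1 * a * a * c * d + 2 * r0 * r0 * r1 * r2 * s0 * s2 * x0 * a * a * c * c - 2 * r0 * r0 * r1 * r2 * s0 * s0 * x2 * a * a * c * c + 2 * r0 * r0 * r1 * r1 * s2 * s2 * x1 * a * a * c * c - 2 * r0 * r0 * r1 * r1 * s1 * s2 * x2 * a * a * c * c + 2 * r0 * r0 *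 r0 * s1 * s2 * s2 * x0 * a * b * c * c - 2 * r0 * r0 * r0 * s1 * s2 * s2 * x0 * a * a * c * d - 2 * r0 * r0 * r0 * s1 * s1 * s1 * x0 * a * b * c * c + 2 * r0 * r0 * r0 * s1 * s1 * s1 * x0 * a * a * c * d + 2 * r0 * r0 * r0 * s0 * s2 * s2 * x1 * a * b * c * c + 2 * r0 * r0 * r0 * s0 * s2 * s2 * x1 * a * a * c * d - 4 * r0 * r0 * r0 * s0 * s1 * s2 * x2 * a * b * c * c + 2 * r0 * r0 * r0 * s0 * s1 * s1 * x1 * a * b * c * c - 2 * r0 * r0 * r0 * s0 * s1 * s1 * x1 * a * a * c * d + 2 * r0 * r0 * r0 * r2 * s1 * s2 * x0 * a * a * c * c - 4 * r0 * r0 * r0 * r2 * s0 * s2 * x1 * a * a * c * c + 2 * r0 * r0 * r0 * r2 * s0 * s1 * x2 * a * a * c * c - 2 * r0 * r0 * r0 * r1 * s2 * s2 * x0 * a * a * c * c + 2 * r0 * r0 * r0 * r1 * s0 * s2 * x2 * a * a * c * c + 2 * r0 * r0 * r0 * r0 * s2 * s2 * x1 * a * a * c * c - 2 * r0 * r0 *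 r0 * r0 * s1 * s2 * x2 * a * a * c * c) = 0 := by
  linear_combination (-s1 * s1 * s2 * s2 * x1 * b * b * c * c + s1 * s1 * s2 * s2 * x1 * a * a * d * d + 2 * s1 * s1 * s1 * s2 * x2 * b * b * c * c - 2 * s1 * s1 * s1 * s2 * x2 * a * a * d * d - s1 * s1 * s1 * s1 * x1 * b * b * c * c + s1 * s1 * s1 * s1 * x1 * a * a * d * d - 2 * s0 * s1 * s2 * s2 * x0 * b * b * c * c + 2 * s0 * s1 * s1 * s1 * x0 * a * a * d * d + s0 * s0 * s2 * s2 * x1 * b * b * c * c + s0 * s0 * s2 * s2 * x1 * a * a * d * d + 2 * s0 * s0 * s1 * s2 * x2 * b * b * c * c - 2 * s0 * s0 * s1 * s2 * x2 * a * a * d * d - 2 * s0 * s0 * s1 * s1 * x1 * b * b * c * c + 2 * s0 * s0 * s0 * s1 * x0 * a * a * d * d - s0 * s0 * s0 * s0 * x1 * b * b * c * c - s0 * s0 * s0 * s0 * x1 * a * a * d * d - 2 * r2 * s1 * s1 * s2 * x1 * a * b * c * c + 2 * r2 * s1 * s1 * s2 * x1 * a * a * c * d + 2 * r2 * s1 *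 s1 * s1 * x2 * a * b * c * c - 2 * r2 * s1 * s1 * s1 * x2 * a * a * c * d - 4 * r2 * s0 * s1 * s2 * x0 * a * b * c * c + 2 * r2 * s0 * s0 * s2 * x1 * a * b * c * c + 2 * r2 * s0 * s0 * s2 * x1 * a * a * c * d + 2 * r2 * s0 * s0 * s1 * x2 * a * b * c * c - 2 * r2 * s0 * s0 * s1 * x2 * a * a * c * d - 2 * r2 * r2 * s0 * s1 * x0 * a * a * c * c + 2 * r2 * r2 * s0 * s0 * x1 * a * a * c * c + 4 * r1 * s1 * s2 * s2 * x1 * a * b * c * c - 4 * r1 * s1 * s2 * s2 * x1 * a * a * c * d - 2 * r1 * s1 * s1 * s2 * x2 * a * b * c * c + 2 * r1 * s1 * s1 * s2 * x2 * a * a * c * d - 2 * r1 * s1 * s1 * s1 * x1 * a * b * c * c + 2 * r1 * s1 * s1 * s1 * x1 * a * a * c * d + 4 * r1 * s0 * s2 * s2 * x0 * a * b * c * c + 2 * r1 * s0 * s1 * s1 * x0 * a * b * c * c + 2 * r1 * s0 * s1 * s1 * x0 * a * a * c * d - 2 * r1 * s0 * s0 * s2 * x2 * a * b * c * c - 2 *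 r1 * s0 * s0 * s2 * x2 * a * a * c * d - 6 * r1 * s0 * s0 * s1 * x1 * a * b * c * c + 2 * r1 * s0 * s0 * s1 * x1 * a * a * c * d - 2 * r1 * s0 * s0 * s0 * x0 * a * b * c * c + 2 * r1 * s0 * s0 * s0 * x0 * a * a * c * d + 2 * r1 * r2 * s0 * s2 * x0 * a * a * c * c - 2 * r1 * r2 * s0 * s0 * x2 * a * a * c * c + 4 * r0 * s1 * s2 * s2 * x0 * a * b * c * c - 2 * r0 * s1 * s1 * s1 * x0 * a * b * c * c + 2 * r0 * s1 * s1 * s1 * x0 * a * a * c * d - 4 * r0 * s0 * s2 * s2 * x1 * a * b * c * c - 4 * r0 * s0 * s2 * s2 * x1 * a * a * c * d + 4 * r0 * s0 * s1 * s2 * x2 * a * a * c * d + 2 * r0 * s0 * s1 * s1 * x1 * a * b * c * c - 2 * r0 * s0 * s1 * s1 * x1 * a * a * c * d + 2 * r0 * s0 * s0 * s1 * x0 * a * b * c * c + 2 * r0 * s0 * s0 * s1 * x0 * a * a * c * d - 2 * r0 * s0 * s0 * s0 * x1 * a * b * c * c - 2 * r0 * s0 * s0 * s0 * x1 * a * a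 * c * d + 2 * r0 * r2 * s1 * s2 * x0 * a * a * c * c - 4 * r0 * r2 * s0 * s2 * x1 * a * a * c * c + 2 * r0 * r2 * s0 * s1 * x2 * a * a * c * c - 2 * r0 * r1 * s2 * s2 * x0 * a * a * c * c + 2 * r0 * r1 * s0 * s2 * x2 * a * a * c * c + 2 * r0 * r0 * s2 * s2 * x1 * a * a * c * c - 2 * r0 * r0 * s1 * s2 * x2 * a * a * c * c) * hR + (2 * r1 * r2 * s1 * s2 * x1 * b * b * c * c - 2 * r1 * r2 * s1 * s2 * x1 * a * a * d * d - 4 * r1 * r2 * s1 * s1 * x2 * b * b * c * c + 4 * r1 * r2 * s1 * s1 * x2 * a * a * d * d + 2 * r1 * r2 * s0 * s2 * x0 * b * b * c * c - 2 * r1 * r2 * s0 * s0 * x2 * b * b * c * c - r1 * r1 * s2 * s2 * x1 * b * b * c * c + r1 * r1 * s2 * s2 * x1 * a * a * d * d + 2 * r1 * r1 * s1 * s2 * x2 * b * b * c * c - 2 * r1 * r1 * s1 * s2 * x2 * a * a * d * d - 3 * r1 * r1 * s1 * s1 * x1 * b * b * c * c + 3 * r1 * r1 * s1 * s1 * x1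 * a * a * d * d - 4 * r1 * r1 * s0 * s1 * x0 * b * b * c * c + 2 * r1 * r1 * s0 * s1 * x0 * a * a * d * d + 2 * r1 * r1 * s0 * s0 * x1 * b * b * c * c - 2 * r1 * r1 * r2 * s2 * x1 * a * b * c * c + 2 * r1 * r1 * r2 * s2 * x1 * a * a * c * d - 2 * r1 * r1 * r2 * s1 * x2 * a * b * c * c + 2 * r1 * r1 * r2 * s1 * x2 * a * a * c * d + 2 * r1 * r1 * r1 * s2 * x2 * a * b * c * c - 2 * r1 * r1 * r1 * s2 * x2 * a * a * c * d + 2 * r1 * r1 * r1 * s1 * x1 * a * b * c * c - 2 * r1 * r1 * r1 * s1 * x1 * a * a * c * d + 2 * r1 * r1 * r1 * s0 * x0 * a * b * c * c + 2 * r1 * r1 * r1 * s0 * x0 * a * a * c * d + 2 * r0 * r2 * s1 * s2 * x0 * b * b * c * c - 2 * r0 * r2 * s0 * s2 * x1 * b * b * c * c - 2 * r0 * r2 * s0 * s2 * x1 * a * a * d * d - 2 * r0 * r2 * s0 * s1 * x2 * b * b * c * c + 4 * r0 * r2 * s0 * s1 * x2 * a * a * d * d - 2 * r0 * r1 * s2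 * s2 * x0 * b * b * c * c + 2 * r0 * r1 * s0 * s2 * x2 * b * b * c * c - 2 * r0 * r1 * s0 * s1 * x1 * b * b * c * c + 2 * r0 * r1 * s0 * s1 * x1 * a * a * d * d - 4 * r0 * r1 * r2 * s2 * x0 * a * b * c * c + 4 * r0 * r1 * r2 * s0 * x2 * a * a * c * d + 6 * r0 * r1 * r1 * s1 * x0 * a * b * c * c + 2 * r0 * r1 * r1 * s1 * x0 * a * a * c * d - 2 * r0 * r1 * r1 * s0 * x1 * a * b * c * c - 6 * r0 * r1 * r1 * s0 * x1 * a * a * c * d + r0 * r0 * s2 * s2 * x1 * b * b * c * c + r0 * r0 * s2 * s2 * x1 * a * a * d * d - 2 * r0 * r0 * s1 * s2 * x2 * a * a * d * d - 2 * r0 * r0 * s1 * s1 * x1 * b * b * c * c + 2 * r0 * r0 * s1 * s1 * x1 * a * a * d * d - 4 * r0 * r0 * s0 * s1 * x0 * b * b * c * c + 2 * r0 * r0 * s0 * s1 * x0 * a * a * d * d + r0 * r0 * s0 * s0 * x1 * b * b * c * c + r0 * r0 * s0 * s0 * x1 * a * a * d * d + 2 * r0 * r0 * r2 * s2 * x1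 * a * b * c * c + 2 * r0 * r0 * r2 * s2 * x1 * a * a * c * d - 2 * r0 * r0 * r2 * s1 * x2 * a * b * c * c - 2 * r0 * r0 * r2 * s1 * x2 * a * a * c * d + 2 * r0 * r0 * r1 * s2 * x2 * a * b * c * c - 2 * r0 * r0 * r1 * s2 * x2 * a * a * c * d - 2 * r0 * r0 * r1 * s1 * x1 * a * b * c * c - 2 * r0 * r0 * r1 * s1 * x1 * a * a * c * d + 6 * r0 * r0 * r1 * s0 * x0 * a * b * c * c + 2 * r0 * r0 * r1 * s0 * x0 * a * a * c * d + 2 * r0 * r0 * r0 * s1 * x0 * a * b * c * c + 2 * r0 * r0 * r0 * s1 * x0 * a * a * c * d - 6 * r0 * r0 * r0 * s0 * x1 * a * b * c * c - 6 * r0 * r0 * r0 * s0 * x1 * a * a * c * d) * hS + (-4 * r1 * r2 * s1 * s1 * s1 * s2 * x1 * b * c + 4 * r1 * r2 * s1 * s1 * s1 * s2 * x1 * a * d + 4 * r1 * r2 * s1 * s1 * s1 * s1 * x2 * b * c - 4 * r1 * r2 * s1 * s1 * s1 * s1 * x2 * a * d - 4 * r1 * r2 * s0 * s1 * s1 * s2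 * x0 * b * c + 4 * r1 * r2 * s0 * s1 * s1 * s2 * x0 * a * d + 4 * r1 * r2 * s0 * s0 * s1 * s1 * x2 * b * c - 4 * r1 * r2 * s0 * s0 * s1 * s1 * x2 * a * d - 4 * r1 * r1 * s1 * s1 * s1 * s2 * x2 * b * c + 4 * r1 * r1 * s1 * s1 * s1 * s2 * x2 * a * d + 4 * r1 * r1 * s1 * s1 * s1 * s1 * x1 * b * c - 4 * r1 * r1 * s1 * s1 * s1 * s1 * x1 * a * d + 4 * r1 * r1 * s0 * s1 * s1 * s1 * x0 * b * c - 4 * r1 * r1 * s0 * s1 * s1 * s1 * x0 * a * d - 2 * r1 * r1 * s0 * s0 * s1 * s2 * x2 * b * c + 2 * r1 * r1 * s0 * s0 * s1 * s2 * x2 * a * d + 2 * r1 * r1 * s0 * s0 * s1 * s1 * x1 * b * c - 2 * r1 * r1 * s0 * s0 * s1 * s1 * x1 * a * d + 2 * r1 * r1 * s0 * s0 * s0 * s1 * x0 * b * c - 2 * r1 * r1 * s0 * s0 * s0 * s1 * x0 * a * d + 4 * r1 * r1 * r2 * s0 * s1 * s2 * x0 * a * c - 2 * r1 * r1 * r2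 * s0 * s0 * s2 * x1 * a * c - 2 * r1 * r1 * r2 * s0 * s0 * s1 * x2 * a * c - 4 * r1 * r1 * r1 * s0 * s1 * s1 * x0 * a * c + 2 * r1 * r1 * r1 * s0 * s0 * s2 * x2 * a * c + 2 * r1 * r1 * r1 * s0 * s0 * s1 * x1 * a * c - 2 * r1 * r1 * r1 * s0 * s0 * s0 * x0 * a * c - 4 * r0 * r2 * s0 * s1 * s1 * s2 * x1 * b * c + 4 * r0 * r2 * s0 * s1 * s1 * s2 * x1 * a * d + 4 * r0 * r2 * s0 * s1 * s1 * s1 * x2 * b * c - 4 * r0 * r2 * s0 * s1 * s1 * s1 * x2 * a * d - 4 * r0 * r2 * s0 * s0 * s1 * s2 * x0 * b * c + 4 * r0 * r2 * s0 * s0 * s1 * s2 * x0 * a * d + 4 * r0 * r2 * s0 * s0 * s0 * s1 * x2 * b * c - 4 * r0 * r2 * s0 * s0 * s0 * s1 * x2 * a * d - 4 * r0 * r1 * s0 * s1 * s1 * s2 * x2 * b * c + 4 * r0 * r1 * s0 * s1 * s1 * s2 * x2 * a * d + 4 * r0 * r1 * s0 * s1 * s1 * s1 * x1 * b * c - 4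 * r0 * r1 * s0 * s1 * s1 * s1 * x1 * a * d + 4 * r0 * r1 * s0 * s0 * s1 * s1 * x0 * b * c - 4 * r0 * r1 * s0 * s0 * s1 * s1 * x0 * a * d + 4 * r0 * r1 * r2 * s1 * s1 * s2 * x0 * a * c - 4 * r0 * r1 * r2 * s0 * s1 * s2 * x1 * a * c + 4 * r0 * r1 * r2 * s0 * s0 * s2 * x0 * a * c - 4 * r0 * r1 * r2 * s0 * s0 * s0 * x2 * a * c - 4 * r0 * r1 * r1 * s1 * s1 * s1 * x0 * a * c + 4 * r0 * r1 * r1 * s0 * s1 * s1 * x1 * a * c - 6 * r0 * r1 * r1 * s0 * s0 * s1 * x0 * a * c + 6 * r0 * r1 * r1 * s0 * s0 * s0 * x1 * a * c - 2 * r0 * r0 * s1 * s1 * s1 * s2 * x2 * b * c + 2 * r0 * r0 * s1 * s1 * s1 * s2 * x2 * a * d + 2 * r0 * r0 * s1 * s1 * s1 * s1 * x1 * b * c - 2 * r0 * r0 * s1 * s1 * s1 * s1 * x1 * a * d + 2 * r0 * r0 * s0 * s1 * s1 * s1 * x0 * b * c - 2 * r0 * r0 * s0 * s1 * s1 * s1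 * x0 * a * d - 4 * r0 * r0 * s0 * s0 * s1 * s2 * x2 * b * c + 4 * r0 * r0 * s0 * s0 * s1 * s2 * x2 * a * d + 4 * r0 * r0 * s0 * s0 * s1 * s1 * x1 * b * c - 4 * r0 * r0 * s0 * s0 * s1 * s1 * x1 * a * d + 4 * r0 * r0 * s0 * s0 * s0 * s1 * x0 * b * c - 4 * r0 * r0 * s0 * s0 * s0 * s1 * x0 * a * d - 2 * r0 * r0 * r2 * s1 * s1 * s2 * x1 * a * c + 2 * r0 * r0 * r2 * s1 * s1 * s1 * x2 * a * c + 4 * r0 * r0 * r2 * s0 * s1 * s2 * x0 * a * c - 8 * r0 * r0 * r2 * s0 * s0 * s2 * x1 * a * c + 4 * r0 * r0 * r2 * s0 * s0 * s1 * x2 * a * c - 2 * r0 * r0 * r1 * s1 * s1 * s2 * x2 * a * c + 2 * r0 * r0 * r1 * s1 * s1 * s1 * x1 * a * c - 6 * r0 * r0 * r1 * s0 * s1 * s1 * x0 * a * c + 4 * r0 * r0 * r1 * s0 * s0 * s2 * x2 * a * c + 4 * r0 * r0 * r1 * s0 * s0 * s1 * x1 * a * c - 4 * r0 * r0 * r1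 * s0 * s0 * s0 * x0 * a * c - 2 * r0 * r0 * r0 * s1 * s1 * s1 * x0 * a * c - 4 * r0 * r0 * r0 * s0 * s1 * s2 * x2 * a * c + 6 * r0 * r0 * r0 * s0 * s1 * s1 * x1 * a * c - 4 * r0 * r0 * r0 * s0 * s0 * s1 * x0 * a * c + 8 * r0 * r0 * r0 * s0 * s0 * s0 * x1 * a * c) * h

set_option maxRecDepth 10000 in
set_option maxHeartbeats 4000000 in
lemma key2 (r0 r1 r2 s0 s1 s2 x0 x1 x2 a b c d : ℝ)
    (hR : r0 * r0 + r1 * r1 - r2 * r2 = 0) (hS : s0 * s0 + s1 * s1 - s2 * s2 = 0)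
    (h : a * d + b * c = 0) :
    (-r2 * r2 * s1 * s1 * s2 * s2 * x2 * b * b * c * c + r2 * r2 * s1 * s1 * s2 * s2 * x2 * a * a * d * d + 2 * r2 * r2 * s1 * s1 * s1 * s2 * x1 * b * b * c * c - 2 * r2 * r2 * s1 * s1 * s1 * s2 * x1 * a * a * d * d - r2 * r2 * s1 * s1 * s1 * s1 * x2 * b * b * c * c + r2 * r2 * s1 * s1 * s1 * s1 * x2 * a * a * d * d + 2 * r2 * r2 * s0 * s1 * s1 * s2 * x0 * b * b * c * c - 2 * r2 * r2 * s0 * s1 * s1 * s2 * x0 * a * a * d * d - r2 * r2 * s0 * s0 * s2 * s2 * x2 * b * b * c * c + r2 * r2 * s0 * s0 * s2 * s2 * x2 * a * a * d * d + 2 * r2 * r2 * s0 * s0 * s1 * s2 * x1 * b * b * c * c - 2 * r2 * r2 * s0 * s0 * s1 * s2 * x1 * a * a * d * d - 2 * r2 * r2 * s0 * s0 * s1 * s1 * x2 * b * b * c * c + 2 * r2 * r2 * s0 * s0 * s1 * s1 * x2 * a * a * d * d + 2 * r2 * r2 * s0 * s0 * s0 * s2 * x0 * b * b * c * c - 2 *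 r2 * r2 * s0 * s0 * s0 * s2 * x0 * a * a * d * d - r2 * r2 * s0 * s0 * s0 * s0 * x2 * b * b * c * c + r2 * r2 * s0 * s0 * s0 * s0 * x2 * a * a * d * d - 2 * r2 * r2 * r2 * s1 * s1 * s2 * x2 * a * b * c * c + 2 * r2 * r2 * r2 * s1 * s1 * s2 * x2 * a * a * c * d + 2 * r2 * r2 * r2 * s1 * s1 * s1 * x1 * a * b * c * c - 2 * r2 * r2 * r2 * s1 * s1 * s1 * x1 * a * a * c * d + 2 * r2 * r2 * r2 * s0 * s1 * s1 * x0 * a * b * c * c - 2 * r2 * r2 * r2 * s0 * s1 * s1 * x0 * a * a * c * d - 2 * r2 * r2 * r2 * s0 * s0 * s2 * x2 * a * b * c * c + 2 * r2 * r2 * r2 * s0 * s0 * s2 * x2 * a * a * c * d + 2 * r2 * r2 * r2 * s0 * s0 * s1 * x1 * a * b * c * c - 2 * r2 * r2 * r2 * s0 * s0 * s1 * x1 * a * a * c * d + 2 * r2 * r2 * r2 * s0 * s0 * s0 * x0 * a * b * c * c - 2 * r2 * r2 * r2 * s0 * s0 * s0 * x0 * a * a * c * d + 2 * r1 * r2 *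 s1 * s2 * s2 * s2 * x2 * b * b * c * c - 2 * r1 * r2 * s1 * s2 * s2 * s2 * x2 * a * a * d * d - 4 * r1 * r2 * s1 * s1 * s2 * s2 * x1 * b * b * c * c + 4 * r1 * r2 * s1 * s1 * s2 * s2 * x1 * a * a * d * d + 2 * r1 * r2 * s1 * s1 * s1 * s2 * x2 * b * b * c * c - 2 * r1 * r2 * s1 * s1 * s1 * s2 * x2 * a * a * d * d - 2 * r1 * r2 * s0 * s1 * s2 * s2 * x0 * b * b * c * c + 4 * r1 * r2 * s0 * s1 * s2 * s2 * x0 * a * a * d * d - 2 * r1 * r2 * s0 * s1 * s1 * s1 * x0 * b * b * c * c - 2 * r1 * r2 * s0 * s0 * s2 * s2 * x1 * b * b * c * c + 2 * r1 * r2 * s0 * s0 * s1 * s2 * x2 * b * b * c * c - 2 * r1 * r2 * s0 * s0 * s1 * s2 * x2 * a * a * d * d + 2 * r1 * r2 * s0 * s0 * s1 * s1 * x1 * b * b * c * c - 2 * r1 * r2 * s0 * s0 * s0 * s1 * x0 * b * b * c * c + 2 * r1 * r2 * s0 * s0 * s0 * s0 * x1 * b * b * c * c + 4 * r1 * r2 *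 r2 * s1 * s2 * s2 * x2 * a * b * c * c - 4 * r1 * r2 * r2 * s1 * s2 * s2 * x2 * a * a * c * d - 2 * r1 * r2 * r2 * s1 * s1 * s2 * x1 * a * b * c * c + 2 * r1 * r2 * r2 * s1 * s1 * s2 * x1 * a * a * c * d - 2 * r1 * r2 * r2 * s1 * s1 * s1 * x2 * a * b * c * c + 2 * r1 * r2 * r2 * s1 * s1 * s1 * x2 * a * a * c * d + 4 * r1 * r2 * r2 * s0 * s1 * s2 * x0 * a * a * c * d - 2 * r1 * r2 * r2 * s0 * s0 * s2 * x1 * a * b * c * c - 2 * r1 * r2 * r2 * s0 * s0 * s2 * x1 * a * a * c * d - 2 * r1 * r2 * r2 * s0 * s0 * s1 * x2 * a * b * c * c + 2 * r1 * r2 * r2 * s0 * s0 * s1 * x2 * a * a * c * d + 2 * r1 * r2 * r2 * r2 * s0 * s1 * x0 * a * a * c * c - 2 * r1 * r2 * r2 * r2 * s0 * s0 * x1 * a * a * c * c - r1 * r1 * s2 * s2 * s2 * s2 * x2 * b * b * c * c + r1 * r1 * s2 * s2 * s2 * s2 * x2 * a * a * d * d + 2 * r1 * r1 * s1 * s2 *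 s2 * s2 * x1 * b * b * c * c - 2 * r1 * r1 * s1 * s2 * s2 * s2 * x1 * a * a * d * d - r1 * r1 * s1 * s1 * s2 * s2 * x2 * b * b * c * c + r1 * r1 * s1 * s1 * s2 * s2 * x2 * a * a * d * d - 2 * r1 * r1 * s0 * s2 * s2 * s2 * x0 * a * a * d * d + 2 * r1 * r1 * s0 * s1 * s1 * s2 * x0 * b * b * c * c + 2 * r1 * r1 * s0 * s0 * s2 * s2 * x2 * b * b * c * c - 2 * r1 * r1 * s0 * s0 * s1 * s2 * x1 * b * b * c * c + 2 * r1 * r1 * s0 * s0 * s1 * s2 * x1 * a * a * d * d - r1 * r1 * s0 * s0 * s1 * s1 * x2 * b * b * c * c - r1 * r1 * s0 * s0 * s1 * s1 * x2 * a * a * d * d + 2 * r1 * r1 * s0 * s0 * s0 * s2 * x0 * a * a * d * d - r1 * r1 * s0 * s0 * s0 * s0 * x2 * b * b * c * c - r1 * r1 * s0 * s0 * s0 * s0 * x2 * a * a * d * d - 2 * r1 * r1 * r2 * s2 * s2 * s2 * x2 * a * b * c * c + 2 * r1 * r1 * r2 * s2 * s2 * s2 * x2 * a * a * c * d - 2 *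 r1 * r1 * r2 * s1 * s2 * s2 * x1 * a * b * c * c + 2 * r1 * r1 * r2 * s1 * s2 * s2 * x1 * a * a * c * d + 4 * r1 * r1 * r2 * s1 * s1 * s2 * x2 * a * b * c * c - 4 * r1 * r1 * r2 * s1 * s1 * s2 * x2 * a * a * c * d - 2 * r1 * r1 * r2 * s0 * s2 * s2 * x0 * a * b * c * c - 2 * r1 * r1 * r2 * s0 * s2 * s2 * x0 * a * a * c * d - 4 * r1 * r1 * r2 * s0 * s1 * s1 * x0 * a * b * c * c + 6 * r1 * r1 * r2 * s0 * s0 * s2 * x2 * a * b * c * c - 2 * r1 * r1 * r2 * s0 * s0 * s2 * x2 * a * a * c * d + 2 * r1 * r1 * r2 * s0 * s0 * s1 * x1 * a * b * c * c + 2 * r1 * r1 * r2 * s0 * s0 * s1 * x1 * a * a * c * d - 2 * r1 * r1 * r2 * s0 * s0 * s0 * x0 * a * b * c * c + 2 * r1 * r1 * r2 * s0 * s0 * s0 * x0 * a * a * c * d - 2 * r1 * r1 * r2 * r2 * s0 * s2 * x0 * a * a * c * c + 2 * r1 * r1 * r2 * r2 * s0 * s0 * x2 * a * a * c * c + 2 *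 r1 * r1 * r1 * s2 * s2 * s2 * x1 * a * b * c * c - 2 * r1 * r1 * r1 * s2 * s2 * s2 * x1 * a * a * c * d - 2 * r1 * r1 * r1 * s1 * s2 * s2 * x2 * a * b * c * c + 2 * r1 * r1 * r1 * s1 * s2 * s2 * x2 * a * a * c * d + 4 * r1 * r1 * r1 * s0 * s1 * s2 * x0 * a * b * c * c - 2 * r1 * r1 * r1 * s0 * s0 * s2 * x1 * a * b * c * c + 2 * r1 * r1 * r1 * s0 * s0 * s2 * x1 * a * a * c * d - 2 * r1 * r1 * r1 * s0 * s0 * s1 * x2 * a * b * c * c - 2 * r1 * r1 * r1 * s0 * s0 * s1 * x2 * a * a * c * d - 2 * r1 * r1 * r1 * r2 * s0 * s1 * x0 * a * a * c * c + 2 * r1 * r1 * r1 * r2 * s0 * s0 * x1 * a * a * c * c + 2 * r1 * r1 * r1 * r1 * s0 * s2 * x0 * a * a * c * c - 2 * r1 * r1 * r1 * r1 * s0 * s0 * x2 * a * a * c * c - 2 * r0 * r2 * s1 * s1 * s2 * s2 * x0 * b * b * c * c + 2 * r0 * r2 * s1 * s1 * s1 * s1 * x0 * b * b * c * c + 2 *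 r0 * r2 * s0 * s2 * s2 * s2 * x2 * b * b * c * c - 2 * r0 * r2 * s0 * s2 * s2 * s2 * x2 * a * a * d * d - 2 * r0 * r2 * s0 * s1 * s2 * s2 * x1 * b * b * c * c + 4 * r0 * r2 * s0 * s1 * s2 * s2 * x1 * a * a * d * d + 2 * r0 * r2 * s0 * s1 * s1 * s2 * x2 * b * b * c * c - 2 * r0 * r2 * s0 * s1 * s1 * s2 * x2 * a * a * d * d - 2 * r0 * r2 * s0 * s1 * s1 * s1 * x1 * b * b * c * c - 4 * r0 * r2 * s0 * s0 * s2 * s2 * x0 * b * b * c * c + 4 * r0 * r2 * s0 * s0 * s2 * s2 * x0 * a * a * d * d + 2 * r0 * r2 * s0 * s0 * s1 * s1 * x0 * b * b * c * c + 2 * r0 * r2 * s0 * s0 * s0 * s2 * x2 * b * b * c * c - 2 * r0 * r2 * s0 * s0 * s0 * s2 * x2 * a * a * d * d - 2 * r0 * r2 * s0 * s0 * s0 * s1 * x1 * b * b * c * c - 2 * r0 * r2 * r2 * s1 * s1 * s2 * x0 * a * b * c * c - 2 * r0 * r2 * r2 * s1 * s1 * s2 * x0 * a * a * c * d + 4 *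 r0 * r2 * r2 * s0 * s2 * s2 * x2 * a * b * c * c - 4 * r0 * r2 * r2 * s0 * s2 * s2 * x2 * a * a * c * d + 4 * r0 * r2 * r2 * s0 * s1 * s2 * x1 * a * a * c * d - 2 * r0 * r2 * r2 * s0 * s1 * s1 * x2 * a * b * c * c + 2 * r0 * r2 * r2 * s0 * s1 * s1 * x2 * a * a * c * d - 2 * r0 * r2 * r2 * s0 * s0 * s2 * x0 * a * b * c * c + 2 * r0 * r2 * r2 * s0 * s0 * s2 * x0 * a * a * c * d - 2 * r0 * r2 * r2 * s0 * s0 * s0 * x2 * a * b * c * c + 2 * r0 * r2 * r2 * s0 * s0 * s0 * x2 * a * a * c * d - 2 * r0 * r2 * r2 * r2 * s1 * s1 * x0 * a * a * c * c + 2 * r0 * r2 * r2 * r2 * s0 * s1 * x1 * a * a * c * c + 2 * r0 * r1 * s1 * s2 * s2 * s2 * x0 * b * b * c * c - 2 * r0 * r1 * s1 * s1 * s1 * s2 * x0 * b * b * c * c + 2 * r0 * r1 * s0 * s2 * s2 * s2 * x1 * b * b * c * c - 6 * r0 * r1 * s0 * s1 * s2 * s2 * x2 * b * b * c * c + 2 *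 r0 * r1 * s0 * s1 * s2 * s2 * x2 * a * a * d * d + 2 * r0 * r1 * s0 * s1 * s1 * s2 * x1 * b * b * c * c - 4 * r0 * r1 * s0 * s1 * s1 * s2 * x1 * a * a * d * d + 2 * r0 * r1 * s0 * s1 * s1 * s1 * x2 * b * b * c * c + 2 * r0 * r1 * s0 * s1 * s1 * s1 * x2 * a * a * d * d + 2 * r0 * r1 * s0 * s0 * s1 * s2 * x0 * b * b * c * c - 4 * r0 * r1 * s0 * s0 * s1 * s2 * x0 * a * a * d * d - 2 * r0 * r1 * s0 * s0 * s0 * s2 * x1 * b * b * c * c + 2 * r0 * r1 * s0 * s0 * s0 * s1 * x2 * b * b * c * c + 2 * r0 * r1 * s0 * s0 * s0 * s1 * x2 * a * a * d * d + 4 * r0 * r1 * r2 * s1 * s2 * s2 * x0 * a * a * c * d + 4 * r0 * r1 * r2 * s1 * s1 * s1 * x0 * a * b * c * c + 4 * r0 * r1 * r2 * s0 * s2 * s2 * x1 * a * a * c * d - 4 * r0 * r1 * r2 * s0 * s1 * s2 * x2 * a * b * c * c - 4 * r0 * r1 * r2 * s0 * s1 * s2 * x2 * a * a * c * d - 4 *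 r0 * r1 * r2 * s0 * s1 * s1 * x1 * a * a * c * d - 4 * r0 * r1 * r2 * s0 * s0 * s1 * x0 * a * a * c * d + 4 * r0 * r1 * r2 * s0 * s0 * s0 * x1 * a * b * c * c + 2 * r0 * r1 * r2 * r2 * s1 * s2 * x0 * a * a * c * c + 2 * r0 * r1 * r2 * r2 * s0 * s2 * x1 * a * a * c * c - 4 * r0 * r1 * r2 * r2 * s0 * s1 * x2 * a * a * c * c + 2 * r0 * r1 * r1 * s2 * s2 * s2 * x0 * a * b * c * c - 2 * r0 * r1 * r1 * s2 * s2 * s2 * x0 * a * a * c * d - 4 * r0 * r1 * r1 * s1 * s1 * s2 * x0 * a * b * c * c - 2 * r0 * r1 * r1 * s0 * s2 * s2 * x2 * a * b * c * c + 2 * r0 * r1 * r1 * s0 * s2 * s2 * x2 * a * a * c * d - 4 * r0 * r1 * r1 * s0 * s1 * s2 * x1 * a * a * c * d + 4 * r0 * r1 * r1 * s0 * s1 * s1 * x2 * a * b * c * c + 4 * r0 * r1 * r1 * s0 * s1 * s1 * x2 * a * a * c * d + 2 * r0 * r1 * r1 * s0 * s0 * s2 * x0 * a * b * c * c + 2 *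 r0 * r1 * r1 * s0 * s0 * s2 * x0 * a * a * c * d - 2 * r0 * r1 * r1 * s0 * s0 * s0 * x2 * a * b * c * c - 2 * r0 * r1 * r1 * s0 * s0 * s0 * x2 * a * a * c * d + 2 * r0 * r1 * r1 * r2 * s1 * s1 * x0 * a * a * c * c - 2 * r0 * r1 * r1 * r2 * s0 * s1 * x1 * a * a * c * c - 2 * r0 * r1 * r1 * r1 * s1 * s2 * x0 * a * a * c * c - 2 * r0 * r1 * r1 * r1 * s0 * s2 * x1 * a * a * c * c + 4 * r0 * r1 * r1 * r1 * s0 * s1 * x2 * a * a * c * c - r0 * r0 * s2 * s2 * s2 * s2 * x2 * b * b * c * c + r0 * r0 * s2 * s2 * s2 * s2 * x2 * a * a * d * d - 2 * r0 * r0 * s1 * s2 * s2 * s2 * x1 * a * a * d * d + 2 * r0 * r0 * s1 * s1 * s2 * s2 * x2 * b * b * c * c + 2 * r0 * r0 * s1 * s1 * s1 * s2 * x1 * a * a * d * d - r0 * r0 * s1 * s1 * s1 * s1 * x2 * b * b * c * c - r0 * r0 * s1 * s1 * s1 * s1 * x2 * a * a * d * d + 2 * r0 * r0 * s0 * s2 *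 s2 * s2 * x0 * b * b * c * c - 2 * r0 * r0 * s0 * s2 * s2 * s2 * x0 * a * a * d * d - 2 * r0 * r0 * s0 * s1 * s1 * s2 * x0 * b * b * c * c + 2 * r0 * r0 * s0 * s1 * s1 * s2 * x0 * a * a * d * d - r0 * r0 * s0 * s0 * s2 * s2 * x2 * b * b * c * c + r0 * r0 * s0 * s0 * s2 * s2 * x2 * a * a * d * d + 2 * r0 * r0 * s0 * s0 * s1 * s2 * x1 * b * b * c * c - r0 * r0 * s0 * s0 * s1 * s1 * x2 * b * b * c * c - r0 * r0 * s0 * s0 * s1 * s1 * x2 * a * a * d * d - 2 * r0 * r0 * r2 * s2 * s2 * s2 * x2 * a * b * c * c + 2 * r0 * r0 * r2 * s2 * s2 * s2 * x2 * a * a * c * d - 2 * r0 * r0 * r2 * s1 * s2 * s2 * x1 * a * b * c * c - 2 * r0 * r0 * r2 * s1 * s2 * s2 * x1 * a * a * c * d + 6 * r0 * r0 * r2 * s1 * s1 * s2 * x2 * a * b * c * c - 2 * r0 * r0 * r2 * s1 * s1 * s2 * x2 * a * a * c * d - 2 * r0 * r0 * r2 * s1 * s1 * s1 * x1 * a * b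 * c * c + 2 * r0 * r0 * r2 * s1 * s1 * s1 * x1 * a * a * c * d - 2 * r0 * r0 * r2 * s0 * s2 * s2 * x0 * a * b * c * c + 2 * r0 * r0 * r2 * s0 * s2 * s2 * x0 * a * a * c * d + 2 * r0 * r0 * r2 * s0 * s1 * s1 * x0 * a * b * c * c + 2 * r0 * r0 * r2 * s0 * s1 * s1 * x0 * a * a * c * d + 4 * r0 * r0 * r2 * s0 * s0 * s2 * x2 * a * b * c * c - 4 * r0 * r0 * r2 * s0 * s0 * s2 * x2 * a * a * c * d - 4 * r0 * r0 * r2 * s0 * s0 * s1 * x1 * a * b * c * c - 2 * r0 * r0 * r2 * r2 * s1 * s2 * x1 * a * a * c * c + 2 * r0 * r0 * r2 * r2 * s1 * s1 * x2 * a * a * c * c + 2 * r0 * r0 * r1 * s2 * s2 * s2 * x1 * a * b * c * c - 2 * r0 * r0 * r1 * s2 * s2 * s2 * x1 * a * a * c * d - 2 * r0 * r0 * r1 * s1 * s2 * s2 * x2 * a * b * c * c + 2 * r0 * r0 * r1 * s1 * s2 * s2 * x2 * a * a * c * d + 2 * r0 * r0 * r1 * s1 * s1 * s2 * x1 * a *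 b * c * c + 2 * r0 * r0 * r1 * s1 * s1 * s2 * x1 * a * a * c * d - 2 * r0 * r0 * r1 * s1 * s1 * s1 * x2 * a * b * c * c - 2 * r0 * r0 * r1 * s1 * s1 * s1 * x2 * a * a * c * d - 4 * r0 * r0 * r1 * s0 * s1 * s2 * x0 * a * a * c * d - 4 * r0 * r0 * r1 * s0 * s0 * s2 * x1 * a * b * c * c + 4 * r0 * r0 * r1 * s0 * s0 * s1 * x2 * a * b * c * c + 4 * r0 * r0 * r1 * s0 * s0 * s1 * x2 * a * a * c * d - 2 * r0 * r0 * r1 * r2 * s0 * s1 * x0 * a * a * c * c + 2 * r0 * r0 * r1 * r2 * s0 * s0 * x1 * a * a * c * c + 2 * r0 * r0 * r1 * r1 * s1 * s2 * x1 * a * a * c * c - 2 * r0 * r0 * r1 * r1 * s1 * s1 * x2 * a * a * c * c + 2 * r0 * r0 * r1 * r1 * s0 * s2 * x0 * a * a * c * c - 2 * r0 * r0 * r1 * r1 * s0 * s0 * x2 * a * a * c * c + 2 * r0 * r0 * r0 * s2 * s2 * s2 * x0 * a * b * c * c - 2 * r0 * r0 * r0 * s2 * s2 * s2 * x0 * a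 * a * c * d - 2 * r0 * r0 * r0 * s1 * s1 * s2 * x0 * a * b * c * c + 2 * r0 * r0 * r0 * s1 * s1 * s2 * x0 * a * a * c * d - 2 * r0 * r0 * r0 * s0 * s2 * s2 * x2 * a * b * c * c + 2 * r0 * r0 * r0 * s0 * s2 * s2 * x2 * a * a * c * d + 4 * r0 * r0 * r0 * s0 * s1 * s2 * x1 * a * b * c * c - 2 * r0 * r0 * r0 * s0 * s1 * s1 * x2 * a * b * c * c - 2 * r0 * r0 * r0 * s0 * s1 * s1 * x2 * a * a * c * d + 2 * r0 * r0 * r0 * r2 * s1 * s1 * x0 * a * a * c * c - 2 * r0 * r0 * r0 * r2 * s0 * s1 * x1 * a * a * c * c - 2 * r0 * r0 * r0 * r1 * s1 * s2 * x0 * a * a * c * c - 2 * r0 * r0 * r0 * r1 * s0 * s2 * x1 * a * a * c * c + 4 * r0 * r0 * r0 * r1 * s0 * s1 * x2 * a * a * c * c + 2 * r0 * r0 * r0 * r0 * s1 * s2 * x1 * a * a * c * c - 2 * r0 * r0 * r0 * r0 * s1 * s1 * x2 * a * a * c * c) = 0 := by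
  linear_combination (s1 * s1 * s2 * s2 * x2 * b * b * c * c - s1 * s1 * s2 * s2 * x2 * a * a * d * d - 2 * s1 * s1 * s1 * s2 * x1 * b * b * c * c + 2 * s1 * s1 * s1 * s2 * x1 * a * a * d * d + s1 * s1 * s1 * s1 * x2 * b * b * c * c - s1 * s1 * s1 * s1 * x2 * a * a * d * d - 2 * s0 * s1 * s1 * s2 * x0 * b * b * c * c + 2 * s0 * s1 * s1 * s2 * x0 * a * a * d * d + s0 * s0 * s2 * s2 * x2 * b * b * c * c - s0 * s0 * s2 * s2 * x2 * a * a * d * d - 2 * s0 * s0 * s1 * s2 * x1 * b * b * c * c + 2 * s0 * s0 * s1 * s2 * x1 * a * a * d * d + 2 * s0 * s0 * s1 * s1 * x2 * b * b * c * c - 2 * s0 * s0 * s1 * s1 * x2 * a * a * d * d - 2 * s0 * s0 * s0 * s2 * x0 * b * b * c * c + 2 * s0 * s0 * s0 * s2 * x0 * a * a * d * d + s0 * s0 * s0 * s0 * x2 * b * b * c * c - s0 * s0 * s0 * s0 * x2 * a * a * d * d + 2 * r2 * s1 * s1 * s2 * x2 * a * b * c * c - 2 * r2 * s1 * s1 *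 s2 * x2 * a * a * c * d - 2 * r2 * s1 * s1 * s1 * x1 * a * b * c * c + 2 * r2 * s1 * s1 * s1 * x1 * a * a * c * d - 2 * r2 * s0 * s1 * s1 * x0 * a * b * c * c + 2 * r2 * s0 * s1 * s1 * x0 * a * a * c * d + 2 * r2 * s0 * s0 * s2 * x2 * a * b * c * c - 2 * r2 * s0 * s0 * s2 * x2 * a * a * c * d - 2 * r2 * s0 * s0 * s1 * x1 * a * b * c * c + 2 * r2 * s0 * s0 * s1 * x1 * a * a * c * d - 2 * r2 * s0 * s0 * s0 * x0 * a * b * c * c + 2 * r2 * s0 * s0 * s0 * x0 * a * a * c * d - 4 * r1 * s1 * s2 * s2 * x2 * a * b * c * c + 4 * r1 * s1 * s2 * s2 * x2 * a * a * c * d + 2 * r1 * s1 * s1 * s2 * x1 * a * b * c * c - 2 * r1 * s1 * s1 * s2 * x1 * a * a * c * d + 2 * r1 * s1 * s1 * s1 * x2 * a * b * c * c - 2 * r1 * s1 * s1 * s1 * x2 * a * a * c * d - 4 * r1 * s0 * s1 * s2 * x0 * a * a * c * d + 2 * r1 * s0 * s0 * s2 * x1 * a * b * c * c + 2 * r1 *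 s0 * s0 * s2 * x1 * a * a * c * d + 2 * r1 * s0 * s0 * s1 * x2 * a * b * c * c - 2 * r1 * s0 * s0 * s1 * x2 * a * a * c * d - 2 * r1 * r2 * s0 * s1 * x0 * a * a * c * c + 2 * r1 * r2 * s0 * s0 * x1 * a * a * c * c + 2 * r1 * r1 * s0 * s2 * x0 * a * a * c * c - 2 * r1 * r1 * s0 * s0 * x2 * a * a * c * c + 2 * r0 * s1 * s1 * s2 * x0 * a * b * c * c + 2 * r0 * s1 * s1 * s2 * x0 * a * a * c * d - 4 * r0 * s0 * s2 * s2 * x2 * a * b * c * c + 4 * r0 * s0 * s2 * s2 * x2 * a * a * c * d - 4 * r0 * s0 * s1 * s2 * x1 * a * a * c * d + 2 * r0 * s0 * s1 * s1 * x2 * a * b * c * c - 2 * r0 * s0 * s1 * s1 * x2 * a * a * c * d + 2 * r0 * s0 * s0 * s2 * x0 * a * b * c * c - 2 * r0 * s0 * s0 * s2 * x0 * a * a * c * d + 2 * r0 * s0 * s0 * s0 * x2 * a * b * c * c - 2 * r0 * s0 * s0 * s0 * x2 * a * a * c * d + 2 * r0 * r2 * s1 * s1 * x0 * a * a * c * c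 - 2 * r0 * r2 * s0 * s1 * x1 * a * a * c * c - 2 * r0 * r1 * s1 * s2 * x0 * a * a * c * c - 2 * r0 * r1 * s0 * s2 * x1 * a * a * c * c + 4 * r0 * r1 * s0 * s1 * x2 * a * a * c * c + 2 * r0 * r0 * s1 * s2 * x1 * a * a * c * c - 2 * r0 * r0 * s1 * s1 * x2 * a * a * c * c) * hR + (-2 * r1 * r2 * s1 * s2 * x2 * b * b * c * c + 2 * r1 * r2 * s1 * s2 * x2 * a * a * d * d + 4 * r1 * r2 * s1 * s1 * x1 * b * b * c * c - 4 * r1 * r2 * s1 * s1 * x1 * a * a * d * d + 2 * r1 * r2 * s0 * s1 * x0 * b * b * c * c - 4 * r1 * r2 * s0 * s1 * x0 * a * a * d * d + 2 * r1 * r2 * s0 * s0 * x1 * b * b * c * c + r1 * r1 * s2 * s2 * x2 * b * b * c * c - r1 * r1 * s2 * s2 * x2 * a * a * d * d - 2 * r1 * r1 * s1 * s2 * x1 * b * b * c * c + 2 * r1 * r1 * s1 * s2 * x1 * a * a * d * d + 3 * r1 * r1 * s1 * s1 * x2 * b * b * c * c - 3 * r1 * r1 * s1 * s1 * x2 * a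 * a * d * d + 2 * r1 * r1 * s0 * s2 * x0 * a * a * d * d - 2 * r1 * r1 * s0 * s0 * x2 * a * a * d * d + 2 * r1 * r1 * r2 * s2 * x2 * a * b * c * c - 2 * r1 * r1 * r2 * s2 * x2 * a * a * c * d + 2 * r1 * r1 * r2 * s1 * x1 * a * b * c * c - 2 * r1 * r1 * r2 * s1 * x1 * a * a * c * d + 2 * r1 * r1 * r2 * s0 * x0 * a * b * c * c + 2 * r1 * r1 * r2 * s0 * x0 * a * a * c * d - 2 * r1 * r1 * r1 * s2 * x1 * a * b * c * c + 2 * r1 * r1 * r1 * s2 * x1 * a * a * c * d - 2 * r1 * r1 * r1 * s1 * x2 * a * b * c * c + 2 * r1 * r1 * r1 * s1 * x2 * a * a * c * d + 2 * r0 * r2 * s1 * s1 * x0 * b * b * c * c - 2 * r0 * r2 * s0 * s2 * x2 * b * b * c * c + 2 * r0 * r2 * s0 * s2 * x2 * a * a * d * d + 2 * r0 * r2 * s0 * s1 * x1 * b * b * c * c - 4 * r0 * r2 * s0 * s1 * x1 * a * a * d * d + 4 * r0 * r2 * s0 * s0 * x0 * b * b * c * c - 4 * r0 * r2 * s0 *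 s0 * x0 * a * a * d * d - 2 * r0 * r1 * s1 * s2 * x0 * b * b * c * c - 2 * r0 * r1 * s0 * s2 * x1 * b * b * c * c + 6 * r0 * r1 * s0 * s1 * x2 * b * b * c * c - 2 * r0 * r1 * s0 * s1 * x2 * a * a * d * d - 4 * r0 * r1 * r2 * s1 * x0 * a * a * c * d - 4 * r0 * r1 * r2 * s0 * x1 * a * a * c * d - 2 * r0 * r1 * r1 * s2 * x0 * a * b * c * c + 2 * r0 * r1 * r1 * s2 * x0 * a * a * c * d - 2 * r0 * r1 * r1 * s0 * x2 * a * b * c * c + 2 * r0 * r1 * r1 * s0 * x2 * a * a * c * d + r0 * r0 * s2 * s2 * x2 * b * b * c * c - r0 * r0 * s2 * s2 * x2 * a * a * d * d + 2 * r0 * r0 * s1 * s2 * x1 * a * a * d * d - 2 * r0 * r0 * s1 * s1 * x2 * a * a * d * d - 2 * r0 * r0 * s0 * s2 * x0 * b * b * c * c + 2 * r0 * r0 * s0 * s2 * x0 * a * a * d * d + 3 * r0 * r0 * s0 * s0 * x2 * b * b * c * c - 3 * r0 * r0 * s0 * s0 * x2 * a * a * d * d + 2 * r0 * r0 * r2 *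 s2 * x2 * a * b * c * c - 2 * r0 * r0 * r2 * s2 * x2 * a * a * c * d + 2 * r0 * r0 * r2 * s1 * x1 * a * b * c * c + 2 * r0 * r0 * r2 * s1 * x1 * a * a * c * d + 2 * r0 * r0 * r2 * s0 * x0 * a * b * c * c - 2 * r0 * r0 * r2 * s0 * x0 * a * a * c * d - 2 * r0 * r0 * r1 * s2 * x1 * a * b * c * c + 2 * r0 * r0 * r1 * s2 * x1 * a * a * c * d - 2 * r0 * r0 * r1 * s1 * x2 * a * b * c * c + 2 * r0 * r0 * r1 * s1 * x2 * a * a * c * d - 2 * r0 * r0 * r0 * s2 * x0 * a * b * c * c + 2 * r0 * r0 * r0 * s2 * x0 * a * a * c * d - 2 * r0 * r0 * r0 * s0 * x2 * a * b * c * c + 2 * r0 * r0 * r0 * s0 * x2 * a * a * c * d) * hS + (4 * r1 * r2 * s1 * s1 * s1 * s2 * x2 * b * c - 4 * r1 * r2 * s1 * s1 * s1 * s2 * x2 * a * d - 4 * r1 * r2 * s1 * s1 * s1 * s1 * x1 * b * c + 4 * r1 * r2 * s1 * s1 * s1 * s1 * x1 * a * d - 4 * r1 * r2 * s0 * s1 *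 s1 * s1 * x0 * b * c + 4 * r1 * r2 * s0 * s1 * s1 * s1 * x0 * a * d + 4 * r1 * r2 * s0 * s0 * s1 * s2 * x2 * b * c - 4 * r1 * r2 * s0 * s0 * s1 * s2 * x2 * a * d - 4 * r1 * r2 * s0 * s0 * s1 * s1 * x1 * b * c + 4 * r1 * r2 * s0 * s0 * s1 * s1 * x1 * a * d - 4 * r1 * r2 * s0 * s0 * s0 * s1 * x0 * b * c + 4 * r1 * r2 * s0 * s0 * s0 * s1 * x0 * a * d + 4 * r1 * r1 * s1 * s1 * s1 * s2 * x1 * b * c - 4 * r1 * r1 * s1 * s1 * s1 * s2 * x1 * a * d - 4 * r1 * r1 * s1 * s1 * s1 * s1 * x2 * b * c + 4 * r1 * r1 * s1 * s1 * s1 * s1 * x2 * a * d + 4 * r1 * r1 * s0 * s1 * s1 * s2 * x0 * b * c - 4 * r1 * r1 * s0 * s1 * s1 * s2 * x0 * a * d + 2 * r1 * r1 * s0 * s0 * s1 * s2 * x1 * b * c - 2 * r1 * r1 * s0 * s0 * s1 * s2 * x1 * a * d - 6 * r1 * r1 * s0 * s0 * s1 * s1 * x2 * b * c + 6 * r1 *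 r1 * s0 * s0 * s1 * s1 * x2 * a * d + 2 * r1 * r1 * s0 * s0 * s0 * s2 * x0 * b * c - 2 * r1 * r1 * s0 * s0 * s0 * s2 * x0 * a * d - 2 * r1 * r1 * s0 * s0 * s0 * s0 * x2 * b * c + 2 * r1 * r1 * s0 * s0 * s0 * s0 * x2 * a * d - 4 * r1 * r1 * r2 * s0 * s1 * s1 * x0 * a * c + 2 * r1 * r1 * r2 * s0 * s0 * s2 * x2 * a * c + 2 * r1 * r1 * r2 * s0 * s0 * s1 * x1 * a * c - 2 * r1 * r1 * r2 * s0 * s0 * s0 * x0 * a * c + 4 * r1 * r1 * r1 * s0 * s1 * s2 * x0 * a * c - 2 * r1 * r1 * r1 * s0 * s0 * s2 * x1 * a * c - 2 * r1 * r1 * r1 * s0 * s0 * s1 * x2 * a * c + 4 * r0 * r2 * s0 * s1 * s1 * s2 * x2 * b * c - 4 * r0 * r2 * s0 * s1 * s1 * s2 * x2 * a * d - 4 * r0 * r2 * s0 * s1 * s1 * s1 * x1 * b * c + 4 * r0 * r2 * s0 * s1 * s1 * s1 * x1 * a * d - 4 * r0 * r2 * s0 * s0 * s1 * s1 * x0 *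 b * c + 4 * r0 * r2 * s0 * s0 * s1 * s1 * x0 * a * d + 4 * r0 * r2 * s0 * s0 * s0 * s2 * x2 * b * c - 4 * r0 * r2 * s0 * s0 * s0 * s2 * x2 * a * d - 4 * r0 * r2 * s0 * s0 * s0 * s1 * x1 * b * c + 4 * r0 * r2 * s0 * s0 * s0 * s1 * x1 * a * d - 4 * r0 * r2 * s0 * s0 * s0 * s0 * x0 * b * c + 4 * r0 * r2 * s0 * s0 * s0 * s0 * x0 * a * d + 4 * r0 * r1 * s0 * s1 * s1 * s2 * x1 * b * c - 4 * r0 * r1 * s0 * s1 * s1 * s2 * x1 * a * d - 4 * r0 * r1 * s0 * s1 * s1 * s1 * x2 * b * c + 4 * r0 * r1 * s0 * s1 * s1 * s1 * x2 * a * d + 4 * r0 * r1 * s0 * s0 * s1 * s2 * x0 * b * c - 4 * r0 * r1 * s0 * s0 * s1 * s2 * x0 * a * d - 4 * r0 * r1 * s0 * s0 * s0 * s1 * x2 * b * c + 4 * r0 * r1 * s0 * s0 * s0 * s1 * x2 * a * d + 4 * r0 * r1 * r2 * s1 * s1 * s1 * x0 * a * c - 4 * r0 * r1 * r2 * s0 *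 s1 * s2 * x2 * a * c + 4 * r0 * r1 * r2 * s0 * s0 * s0 * x1 * a * c - 4 * r0 * r1 * r1 * s1 * s1 * s2 * x0 * a * c + 4 * r0 * r1 * r1 * s0 * s1 * s1 * x2 * a * c + 2 * r0 * r1 * r1 * s0 * s0 * s2 * x0 * a * c - 2 * r0 * r1 * r1 * s0 * s0 * s0 * x2 * a * c + 2 * r0 * r0 * s1 * s1 * s1 * s2 * x1 * b * c - 2 * r0 * r0 * s1 * s1 * s1 * s2 * x1 * a * d - 2 * r0 * r0 * s1 * s1 * s1 * s1 * x2 * b * c + 2 * r0 * r0 * s1 * s1 * s1 * s1 * x2 * a * d + 2 * r0 * r0 * s0 * s1 * s1 * s2 * x0 * b * c - 2 * r0 * r0 * s0 * s1 * s1 * s2 * x0 * a * d + 4 * r0 * r0 * s0 * s0 * s1 * s2 * x1 * b * c - 4 * r0 * r0 * s0 * s0 * s1 * s2 * x1 * a * d - 6 * r0 * r0 * s0 * s0 * s1 * s1 * x2 * b * c + 6 * r0 * r0 * s0 * s0 * s1 * s1 * x2 * a * d + 4 * r0 * r0 * s0 * s0 * s0 * s2 * x0 * b * c - 4 * r0 *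 r0 * s0 * s0 * s0 * s2 * x0 * a * d - 4 * r0 * r0 * s0 * s0 * s0 * s0 * x2 * b * c + 4 * r0 * r0 * s0 * s0 * s0 * s0 * x2 * a * d + 2 * r0 * r0 * r2 * s1 * s1 * s2 * x2 * a * c - 2 * r0 * r0 * r2 * s1 * s1 * s1 * x1 * a * c + 2 * r0 * r0 * r2 * s0 * s1 * s1 * x0 * a * c - 4 * r0 * r0 * r2 * s0 * s0 * s1 * x1 * a * c + 2 * r0 * r0 * r1 * s1 * s1 * s2 * x1 * a * c - 2 * r0 * r0 * r1 * s1 * s1 * s1 * x2 * a * c - 4 * r0 * r0 * r1 * s0 * s0 * s2 * x1 * a * c + 4 * r0 * r0 * r1 * s0 * s0 * s1 * x2 * a * c - 2 * r0 * r0 * r0 * s1 * s1 * s2 * x0 * a * c + 4 * r0 * r0 * r0 * s0 * s1 * s2 * x1 * a * c - 2 * r0 * r0 * r0 * s0 * s1 * s1 * x2 * a * c) * h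

private lemma finmk0 : (⟨0, by omega⟩ : Fin 3) = 0 := rfl
private lemma finmk1 : (⟨1, by omega⟩ : Fin 3) = 1 := rfl
private lemma finmk2 : (⟨2, by omega⟩ : Fin 3) = 2 := rfl

set_option maxRecDepth 10000 in
set_option maxHeartbeats 4000000 in
lemma key (R S : Fin 3 → ℝ) (hR : mink R R = 0) (hS : mink S S = 0)
    (a b c d : ℝ) (h : a * d + b * c = 0) (X : Fin 3 → ℝ) :
    (a ^ 2 * mink (nvec R S) (nvec R S)) • rev (c • R + d • S) X
      = c ^ 2 • rev (nvec R S) (rev (a • R + b • S) X) := by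
  have hR' : R 0 * R 0 + R 1 * R 1 - R 2 * R 2 = 0 := hR
  have hS' : S 0 * S 0 + S 1 * S 1 - S 2 * S 2 = 0 := hS
  funext i
  fin_cases i <;>
    simp only [rev, mink, nvec, Pi.add_apply, Pi.sub_apply, Pi.smul_apply, smul_eq_mul,
      Matrix.cons_val_zero, Matrix.cons_val_one, Matrix.head_cons, Matrix.cons_val_two,
      Matrix.tail_cons, Fin.isValue, finmk0, finmk1, finmk2]
  · linear_combination key0 (R 0) (R 1) (R 2) (S 0) (S 1) (S 2) (X 0) (X 1) (X 2) a b c d hR' hS' h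
  · linear_combination key1 (R 0) (R 1) (R 2) (S 0) (S 1) (S 2) (X 0) (X 1) (X 2) a b c d hR' hS' h
  · linear_combination key2 (R 0) (R 1) (R 2) (S 0) (S 1) (S 2) (X 0) (X 1) (X 2) a b c d hR' hS' h


lemma chain_smul (m : ℕ) (P : Fin m → (Fin 3 → ℝ)) (s : ℝ) (X : Fin 3 → ℝ) :
    chain m P (s • X) = s • chain m P X := by
  induction m with
  | zero => simp [chain]
  | succ m ih =>
    show rev _ (chain m _ (s • X)) = s • rev _ (chain m _ X)
    rw [ih, rev_smul]

lemma rev_iter_comm (P N : Fin 3 → ℝ) (h : mink P N = 0) (m : ℕ) (Y : Fin 3 → ℝ) :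
    rev P ((rev N)^[m] Y) = (rev N)^[m] (rev P Y) := by
  induction m generalizing Y with
  | zero => rfl
  | succ m ih =>
    rw [Function.iterate_succ_apply', Function.iterate_succ_apply',
      ← rev_comm P N h, ih]

lemma revN_iter_even (N : Fin 3 → ℝ) (k : ℕ) (Y : Fin 3 → ℝ) :
    (rev N)^[2 * k] Y = ((mink N N) ^ 2) ^ k • Y := by
  induction k generalizing Y with
  | zero => simp
  | succ k ih =>
    have h2 : 2 * (k + 1) = 2 + 2 * k := by ring
    rw [h2, Function.iterate_add_apply, ih,
      show ((rev N)^[2] (((mink N N) ^ 2) ^ k • Y)) = rev N (rev N (((mink N N) ^ 2) ^ k • Y)) from rfl,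
      rev_smul, rev_smul, rev_rev_self, smul_smul, ← pow_succ]

lemma chain_rel (N : Fin 3 → ℝ) (m : ℕ) :
    ∀ (P Q : Fin m → (Fin 3 → ℝ)) (u : Fin m → ℝ),
      (∀ i, mink (P i) N = 0) →
      (∀ i X, rev (Q i) X = u i • rev N (rev (P i) X)) →
      ∀ X, chain m Q X = (∏ i, u i) • (rev N)^[m] (chain m P X) := by
  induction m with
  | zero => intro P Q u _ _ X; simp [chain]
  | succ m ih =>
    intro P Q u horth hrel X
    have IH := ih (fun i => P i.castSucc) (fun i => Q i.castSucc) (fun i => u i.castSucc)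
      (fun i => horth _) (fun i X => hrel _ X) X
    show rev (Q (Fin.last m)) (chain m (fun i => Q i.castSucc) X)
      = (∏ i, u i) • (rev N)^[m + 1] (rev (P (Fin.last m)) (chain m (fun i => P i.castSucc) X))
    rw [IH, rev_smul, hrel (Fin.last m),
      rev_iter_comm _ _ (horth (Fin.last m)),
      Function.iterate_succ_apply', Fin.prod_univ_castSucc, smul_smul]

/-- **Closing property of conjugate points, secant case.** If the line `W` meets the
conic `C` in two points `R, S`, and the points `P 0, …, P (2n-1)` on `W` off `C` have
the closing property with respect to `C`, then so do their conjugate points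
`Q 0, …, Q (2n-1)` on `W` (`⟨Pᵢ,Qᵢ⟩ = 0`). -/
theorem conjugate_points_closing_secant
    (W : Submodule ℝ (Fin 3 → ℝ)) (hdim : Module.finrank ℝ W = 2)
    (R S : Fin 3 → ℝ) (hR : R ∈ W) (hS : S ∈ W) (hRS : LinearIndependent ℝ ![R, S])
    (hRC : mink R R = 0) (hSC : mink S S = 0)
    (n : ℕ) (P Q : Fin (2 * n) → (Fin 3 → ℝ))
    (hPW : ∀ i, P i ∈ W) (hPC : ∀ i, mink (P i) (P i) ≠ 0)
    (hclose : closes (2 * n) P)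
    (hQW : ∀ i, Q i ∈ W) (hQ0 : ∀ i, Q i ≠ 0)
    (hconj : ∀ i, mink (P i) (Q i) = 0) (hQC : ∀ i, mink (Q i) (Q i) ≠ 0) :
    closes (2 * n) Q := by
  rcases Nat.eq_zero_or_pos n with hn | hn
  · subst hn
    exact ⟨1, one_ne_zero, fun X => by rw [show chain (2 * 0) Q X = X from rfl, one_smul]⟩
  -- identify W with the span of {R, S}
  have hrange : Set.range ![R, S] = ({R, S} : Set (Fin 3 → ℝ)) := by
    ext x
    simp [Fin.exists_fin_two]
    tauto
  have hrank : Module.finrank ℝ (Submodule.span ℝ ({R, S} : Set (Fin 3 → ℝ))) = 2 := by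
    rw [← hrange, finrank_span_eq_card hRS]
    simp
  have hle : Submodule.span ℝ ({R, S} : Set (Fin 3 → ℝ)) ≤ W := by
    rw [Submodule.span_le]
    intro x hx
    rcases hx with h | h
    · rw [h]; exact hR
    · rw [Set.mem_singleton_iff.mp h]; exact hS
  have hW : W = Submodule.span ℝ ({R, S} : Set (Fin 3 → ℝ)) :=
    (Submodule.eq_of_le_of_finrank_le hle (by rw [hdim, hrank])).symm
  choose pa pb hP using fun i => Submodule.mem_span_pair.mp (hW ▸ hPW i)
  choose qc qd hQ using fun i => Submodule.mem_span_pair.mp (hW ▸ hQW i)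
  have hPP : ∀ i, mink (P i) (P i) = 2 * pa i * pb i * mink R S := fun i => by
    rw [← hP i, mink_comb, hRC, hSC]; ring
  set i0 : Fin (2 * n) := ⟨0, by omega⟩ with hi0
  have hr : mink R S ≠ 0 := fun h0 => hPC i0 (by rw [hPP i0, h0]; ring)
  have hpa : ∀ i, pa i ≠ 0 := fun i h0 => hPC i (by rw [hPP i, h0]; ring)
  have hpb : ∀ i, pb i ≠ 0 := fun i h0 => hPC i (by rw [hPP i, h0]; ring)
  have hconj' : ∀ i, pa i * qd i + pb i * qc i = 0 := by
    intro i
    have h1 : mink (P i) (Q i) = (pa i * qd i + pb i * qc i) * mink R S := by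
      rw [← hP i, ← hQ i, mink_comb, hRC, hSC]; ring
    have h2 : (pa i * qd i + pb i * qc i) * mink R S = 0 := by rw [← h1, hconj i]
    exact (mul_eq_zero.mp h2).resolve_right hr
  have hqc : ∀ i, qc i ≠ 0 := by
    intro i h0
    have h1 : pa i * qd i = 0 := by have := hconj' i; rw [h0] at this; linarith [this]
    have h2 : qd i = 0 := (mul_eq_zero.mp h1).resolve_left (hpa i)
    exact hQ0 i (by rw [← hQ i, h0, h2]; simp)
  set N : Fin 3 → ℝ := nvec R S with hN
  set K : ℝ := mink N N with hKdef
  have hK : K = (mink R S) ^ 2 := by rw [hKdef, hN, mink_nvec_self, hRC, hSC]; ring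
  have hKne : K ≠ 0 := by rw [hK]; exact pow_ne_zero _ hr
  set u : Fin (2 * n) → ℝ := fun i => qc i ^ 2 / (pa i ^ 2 * K) with hu
  have hne : ∀ i, pa i ^ 2 * K ≠ 0 := fun i => mul_ne_zero (pow_ne_zero _ (hpa i)) hKne
  have hune : ∀ i, u i ≠ 0 := fun i => div_ne_zero (pow_ne_zero _ (hqc i)) (hne i)
  have horth : ∀ i, mink (P i) N = 0 := fun i => by rw [← hP i, hN]; exact mink_nvec R S _ _
  have hrel : ∀ i X, rev (Q i) X = u i • rev N (rev (P i) X) := by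
    intro i X
    have hkey := key R S hRC hSC (pa i) (pb i) (qc i) (qd i) (hconj' i) X
    rw [hP i, hQ i, ← hN, ← hKdef] at hkey
    calc rev (Q i) X = (pa i ^ 2 * K)⁻¹ • ((pa i ^ 2 * K) • rev (Q i) X) := by
          rw [smul_smul, inv_mul_cancel₀ (hne i), one_smul]
      _ = (pa i ^ 2 * K)⁻¹ • (qc i ^ 2 • rev N (rev (P i) X)) := by rw [hkey]
      _ = u i • rev N (rev (P i) X) := by
          rw [smul_smul, hu]
          congr 1
          field_simp
  obtain ⟨c, hc, hchain⟩ := hclose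
  refine ⟨(∏ i, u i) * ((K ^ 2) ^ n * c), ?_, ?_⟩
  · exact mul_ne_zero (Finset.prod_ne_zero_iff.mpr fun i _ => hune i)
      (mul_ne_zero (pow_ne_zero _ (pow_ne_zero _ hKne)) hc)
  · intro X
    rw [chain_rel N (2 * n) P Q u horth hrel X, hchain X, revN_iter_even N n (c • X),
      smul_smul, smul_smul]
    congr 1
    rw [hKdef]
    ring
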